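/- arXiv:1012.4644 — 2 statements merged into one kernel-verified Lean document; each statement's English description precedes it below -/
import Mathlib

section
/- For 0 ≤ t ≤ 1 let u_t be an inner function and h_t ∈ (H^∞)^{-1}. If the map t ↦ |u_t h_t| is continuous from [0,1] into L^∞(𝔻), then both t ↦ |u_t| and t ↦ |h_t| are continuous from [0,1] into L^∞(𝔻). -/
open MeasureTheory Filter Topology Set

noncomputable section

/-- The open unit disk in the complex plane. -/
def unitDisc : Set ℂ := Metric.ball (0:ℂ) 1

/-- The point `e^{iθ}` on the unit circle. -/
def expI (θ : ℝ) : ℂ := Complex.exp (θ * Complex.I)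

/-- Membership in `H^∞`: bounded analytic functions on the unit disk. -/
def MemHinf (f : ℂ → ℂ) : Prop :=
  DifferentiableOn ℂ f unitDisc ∧ ∃ M : ℝ, ∀ z ∈ unitDisc, ‖f z‖ ≤ M

/-- Membership in `(H^∞)⁻¹`: invertible elements of `H^∞`, i.e. bounded analytic
functions whose modulus is bounded below away from zero on the disk. -/
def MemHinfInv (h : ℂ → ℂ) : Prop :=
  MemHinf h ∧ ∃ ε > (0:ℝ), ∀ z ∈ unitDisc, ε ≤ ‖h z‖

/-- `f` has radial limit `L` at the boundary point `e^{iθ}`. -/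
def RadialLimit (f : ℂ → ℂ) (θ : ℝ) (L : ℂ) : Prop :=
  Tendsto (fun r : ℝ => f ((r : ℂ) * expI θ)) (nhdsWithin 1 (Set.Iio 1)) (nhds L)

/-- `u` is an inner function: it belongs to `H^∞` and its radial limits have modulus one
at almost every point of the unit circle. -/
def IsInner (u : ℂ → ℂ) : Prop :=
  MemHinf u ∧ ∀ᵐ θ : ℝ, ∃ L : ℂ, ‖L‖ = 1 ∧ RadialLimit u θ L

/-- Membership in `𝔍*`: the set of products `u·h` with `u` inner and `h ∈ (H^∞)⁻¹`
(equality of functions being required on the unit disk). -/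
def MemJstar (f : ℂ → ℂ) : Prop :=
  ∃ u h : ℂ → ℂ, IsInner u ∧ MemHinfInv h ∧ ∀ z ∈ unitDisc, f z = u z * h z

/-- The normalized Blaschke factor with zero `a`.  For `a = 0` the factor is `z`; points `a`
with `‖a‖ ≥ 1` serve as sentinels whose factor is the constant `1` (so that finite Blaschke
products are covered by sequences that are eventually sentinels). -/
def blaschkeFactor (a z : ℂ) : ℂ :=
  if ‖a‖ < 1 then
    (if a = 0 then z else ((starRingEnd ℂ) a / (‖a‖ : ℂ)) * ((a - z) / (1 - (starRingEnd ℂ) a * z)))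
  else 1

/-- `f` is the Blaschke product with unimodular constant `lam` and zeros the terms of `zs`
lying in the open unit disk (terms of `zs` on the unit circle are sentinels contributing a
factor `1`); the zeros satisfy the Blaschke condition. -/
def IsBlaschkeProductWith (f : ℂ → ℂ) (lam : ℂ) (zs : ℕ → ℂ) : Prop :=
  ‖lam‖ = 1 ∧ (∀ n, ‖zs n‖ ≤ 1) ∧ Summable (fun n => 1 - ‖zs n‖) ∧
  ∀ z ∈ unitDisc, HasProd (fun n => blaschkeFactor (zs n) z) (lam⁻¹ * f z)

/-- `f` is a Blaschke product. -/
def IsBlaschkeProduct (f : ℂ → ℂ) : Prop :=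
  ∃ lam zs, IsBlaschkeProductWith f lam zs

/-- `f` is a finite Blaschke product (only finitely many genuine zeros). -/
def IsFiniteBlaschkeProduct (f : ℂ → ℂ) : Prop :=
  ∃ lam zs, IsBlaschkeProductWith f lam zs ∧ ∃ N : ℕ, ∀ n, N ≤ n → ¬ ‖zs n‖ < 1

/-- The pseudohyperbolic distance `ρ(z,w) = |(z-w)/(1- w̄ z)|`. -/
def pseudoDist (z w : ℂ) : ℝ := ‖(z - w) / (1 - (starRingEnd ℂ) w * z)‖

/-- The hyperbolic distance `β(z,w) = log ((1+ρ)/(1-ρ))`. -/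
def hypDist (z w : ℂ) : ℝ :=
  Real.log ((1 + pseudoDist z w) / (1 - pseudoDist z w))

/-- The (normalized) integral mean of `‖f‖` on the circle of radius `r`. -/
def circleAvgNorm (f : ℂ → ℂ) (r : ℝ) : ℝ :=
  (∫ θ in (0:ℝ)..(2*Real.pi), ‖f ((r : ℂ) * expI θ)‖) / (2*Real.pi)

/-- `f` belongs to the Hardy space `H¹` with norm at most `B`. -/
def MemH1With (f : ℂ → ℂ) (B : ℝ) : Prop :=
  DifferentiableOn ℂ f unitDisc ∧ ∀ r ∈ Set.Ico (0:ℝ) 1, circleAvgNorm f r ≤ B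

/-- `μ` is a Carleson measure with constant `C`:
`∫ ‖f‖ dμ ≤ C‖f‖₁` for every `f` in the Hardy space `H¹`. -/
def IsCarlesonWith (μ : Measure ℂ) (C : ℝ) : Prop :=
  ∀ f : ℂ → ℂ, ∀ B : ℝ, MemH1With f B → (∫ z, ‖f z‖ ∂μ) ≤ C * B

/-- `μ` is a Carleson measure. -/
def IsCarleson (μ : Measure ℂ) : Prop := ∃ C : ℝ, IsCarlesonWith μ C

/-- The Carleson norm `‖μ‖_c` of a measure. -/
def carlesonNorm (μ : Measure ℂ) : ℝ := sInf {C | 0 ≤ C ∧ IsCarlesonWith μ C}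

/-- The measure `μ_b = Σ_k (1-|z_k|) δ_{z_k}` associated to a zero sequence. -/
def zeroMeasure (zs : ℕ → ℂ) : Measure ℂ :=
  Measure.sum (fun n => (ENNReal.ofReal (1 - ‖zs n‖)) • Measure.dirac (zs n))

/-- `f` is a Carleson–Newman Blaschke product with zero sequence `zs` (all the terms of `zs`
being genuine zeros, lying in the unit disk). -/
def IsCNBPWith (f : ℂ → ℂ) (zs : ℕ → ℂ) : Prop :=
  (∃ lam, IsBlaschkeProductWith f lam zs) ∧ (∀ n, ‖zs n‖ < 1) ∧
    IsCarleson (zeroMeasure zs)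

/-- `f` is a Carleson–Newman Blaschke product. -/
def IsCNBP (f : ℂ → ℂ) : Prop :=
  ∃ lam zs, IsBlaschkeProductWith f lam zs ∧ IsCarleson (zeroMeasure zs)

/-- Membership in `CN*`: the set of products `b·h` with `b` a Carleson–Newman Blaschke
product and `h ∈ (H^∞)⁻¹`. -/
def MemCNstar (f : ℂ → ℂ) : Prop :=
  ∃ c h : ℂ → ℂ, IsCNBP c ∧ MemHinfInv h ∧ ∀ z ∈ unitDisc, f z = c z * h z

/-- Continuity of a one-parameter family `γ` on `[0,1]` with respect to the supremum
norm of `H^∞` over the unit disk. -/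
def PathSupContinuousOn (γ : ℝ → ℂ → ℂ) : Prop :=
  ∀ t ∈ Set.Icc (0:ℝ) 1, ∀ ε > (0:ℝ), ∃ δ > (0:ℝ), ∀ s ∈ Set.Icc (0:ℝ) 1,
    |s - t| < δ → ∀ z ∈ unitDisc, ‖γ s z - γ t z‖ ≤ ε

/-- `f` and `g` can be joined by a path (continuous in the `H^∞` norm) lying in the
class `P`. -/
def JoinedInClass (P : (ℂ → ℂ) → Prop) (f g : ℂ → ℂ) : Prop :=
  ∃ γ : ℝ → ℂ → ℂ, PathSupContinuousOn γ ∧ (∀ t ∈ Set.Icc (0:ℝ) 1, P (γ t)) ∧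
    (∀ z ∈ unitDisc, γ 0 z = f z) ∧ (∀ z ∈ unitDisc, γ 1 z = g z)

/-- The truncated Cauchy integral at `e^{iθ}` of the complex measure `w·dν`. -/
def truncCauchy (ν : Measure ℂ) (w : ℂ → ℂ) (θ ε : ℝ) : ℂ :=
  ∫ z in {z : ℂ | ε < ‖z - expI θ‖}, w z / (expI θ - z) ∂ν

/-- `F` is (a.e. on the unit circle) the Cauchy transform of the complex measure `w·dν`,
i.e. the a.e. limit of the truncated Cauchy integrals. -/
def IsCauchyTransform (ν : Measure ℂ) (w : ℂ → ℂ) (F : ℝ → ℂ) : Prop :=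
  ∀ᵐ θ : ℝ, Tendsto (fun ε : ℝ => truncCauchy ν w θ ε)
    (nhdsWithin 0 (Set.Ioi 0)) (nhds (F θ))

/-- The point `a + t(b-a)` of the segment from `a` to `b`. -/
def segPoint (a b : ℂ) (t : ℝ) : ℂ := a + (t : ℂ) * (b - a)

/-- The truncated Cauchy integral at `e^{iθ}` of the measure `σ = Σ_k σ_k`, where `σ_k` is
the path measure (`∫ f dσ_k = ∫_{z_k}^{z*_k} f(ζ) dζ`) on the segment from `z k` to `zs k`. -/
def truncSegCauchy (z zs : ℕ → ℂ) (θ ε : ℝ) : ℂ :=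
  ∑' k : ℕ, ∫ t in (0:ℝ)..1,
    Set.indicator {s : ℝ | ε < ‖segPoint (z k) (zs k) s - expI θ‖}
      (fun s => (zs k - z k) / (expI θ - segPoint (z k) (zs k) s)) t

/-- `F` is (a.e. on the unit circle) the Cauchy transform of the sum of the path measures
along the segments from `z k` to `zs k`. -/
def IsSegCauchyTransform (z zs : ℕ → ℂ) (F : ℝ → ℂ) : Prop :=
  ∀ᵐ θ : ℝ, Tendsto (fun ε : ℝ => truncSegCauchy z zs θ ε)
    (nhdsWithin 0 (Set.Ioi 0)) (nhds (F θ))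

/-- The Poisson integral of a boundary function `v` at `z ∈ 𝔻`. -/
def poissonIntegral (v : ℝ → ℝ) (z : ℂ) : ℝ :=
  (∫ θ in (0:ℝ)..(2*Real.pi), ((1 - ‖z‖^2) / ‖expI θ - z‖^2) * v θ) / (2*Real.pi)

/-- `vt` is the harmonic conjugate (boundary) function of `v ∈ L¹(∂𝔻)`, normalized to
vanish at the origin: the harmonic extension of `v` has a harmonic conjugate vanishing at `0`
whose radial limits agree a.e. with `vt`. -/
def IsConjugateFn (v vt : ℝ → ℝ) : Prop :=
  ∃ G : ℂ → ℂ, DifferentiableOn ℂ G unitDisc ∧ (G 0).im = 0 ∧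
    (∀ z ∈ unitDisc, (G z).re = poissonIntegral v z) ∧
    ∀ᵐ θ : ℝ, Tendsto (fun r : ℝ => (G ((r : ℂ) * expI θ)).im)
      (nhdsWithin 1 (Set.Iio 1)) (nhds (vt θ))

/-- `L` is the boundary function of `log |h|`. -/
def HasBoundaryLogMod (h : ℂ → ℂ) (L : ℝ → ℝ) : Prop :=
  ∀ᵐ θ : ℝ, Tendsto (fun r : ℝ => Real.log ‖h ((r : ℂ) * expI θ)‖)
    (nhdsWithin 1 (Set.Iio 1)) (nhds (L θ))

/-- The condition `2 Im C(σ) - (log|h|)~ ∈ L^∞(∂𝔻)`, where `σ` is the sum of the path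
measures along the segments from `z k` to `zs k` and `(log|h|)~` is the harmonic conjugate
of the boundary function of `log|h|`. -/
def SegCauchyMinusConjBounded (z zs : ℕ → ℂ) (h : ℂ → ℂ) : Prop :=
  ∀ F : ℝ → ℂ, IsSegCauchyTransform z zs F →
    ∃ L vt : ℝ → ℝ, HasBoundaryLogMod h L ∧ IsConjugateFn L vt ∧
      ∃ M : ℝ, ∀ᵐ θ : ℝ, |2 * (F θ).im - vt θ| ≤ M

/-- `b` is a floating Blaschke product: there are radii `r n → 1` with
`inf_θ |b(r_n e^{iθ})| → 1`. -/
def IsFloating (b : ℂ → ℂ) : Prop :=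
  IsBlaschkeProduct b ∧ ∃ r : ℕ → ℝ, (∀ n, r n ∈ Set.Ioo (0:ℝ) 1) ∧
    Tendsto r atTop (nhds 1) ∧
    Tendsto (fun n => ⨅ θ : ℝ, ‖b ((r n : ℂ) * expI θ)‖) atTop (nhds 1)

/-- Continuity of `t ↦ |f t|` from `[0,1]` into `L^∞(𝔻)`. -/
def ModPathContinuousOn (f : ℝ → ℂ → ℂ) : Prop :=
  ∀ t ∈ Set.Icc (0:ℝ) 1, ∀ ε > (0:ℝ), ∃ δ > (0:ℝ), ∀ s ∈ Set.Icc (0:ℝ) 1,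
    |s - t| < δ → ∀ z ∈ unitDisc, |‖f s z‖ - ‖f t z‖| ≤ ε

/-- `z/|z|`, interpreted as `-1` when `z = 0`. -/
def unimod (a : ℂ) : ℂ := if a = 0 then -1 else a / (‖a‖ : ℂ)

/-- The cone `{z ∈ 𝔻 : |z - ξ| < α (1-|z|)}` with vertex `ξ` and opening `α`. -/
def ntCone (ξ : ℂ) (α : ℝ) : Set ℂ := {z : ℂ | ‖z‖ < 1 ∧ ‖z - ξ‖ < α * (1 - ‖z‖)}

/-- The truncated cone `Λ_α^r(ξ)`. -/
def truncCone (ξ : ℂ) (α r : ℝ) : Set ℂ := {z ∈ ntCone ξ α | r < ‖z‖}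

/-- `g` has non-tangential limit `L` at `ξ` through the set `S`. -/
def HasNTLimWithin (g : ℂ → ℂ) (S : Set ℂ) (ξ L : ℂ) : Prop :=
  ∀ α : ℝ, 1 < α → Tendsto g (nhdsWithin ξ (S ∩ ntCone ξ α)) (nhds L)

/-- `G ⊆ 𝔻` is non-tangentially dense: for a.e. boundary point it contains truncated
cones of arbitrarily large opening. -/
def NTDense (G : Set ℂ) : Prop :=
  ∀ᵐ θ : ℝ, ∀ α : ℝ, 1 < α → ∃ r ∈ Set.Ico (0:ℝ) 1, truncCone (expI θ) α r ⊆ G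

/-- Arclength (one-dimensional Hausdorff measure) on a subset of the plane. -/
def arcLengthOn (S : Set ℂ) : Measure ℂ :=
  (MeasureTheory.Measure.hausdorffMeasure 1 : Measure ℂ).restrict S

/-- `f` is harmonic (real-valued) on the open set `U`: locally the real part of an
analytic function. -/
def IsRealHarmonicOn (f : ℂ → ℝ) (U : Set ℂ) : Prop :=
  ∀ z ∈ U, ∃ r > (0:ℝ), Metric.ball z r ⊆ U ∧ ∃ g : ℂ → ℂ,
    DifferentiableOn ℂ g (Metric.ball z r) ∧ ∀ w ∈ Metric.ball z r, f w = (g w).re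

/-- `ω` is the harmonic measure of the domain `U` from the point `z`: a probability
measure on `∂U` reproducing at `z` the values of functions harmonic on `U` and continuous
on its closure. -/
def IsHarmonicMeasure (U : Set ℂ) (z : ℂ) (ω : Measure ℂ) : Prop :=
  IsProbabilityMeasure ω ∧ ω (frontier U)ᶜ = 0 ∧
  ∀ H : ℂ → ℝ, ContinuousOn H (closure U) → IsRealHarmonicOn H U →
    H z = ∫ x, H x ∂ω

/-- A rectifiable Jordan loop in the plane: a continuous `1`-periodic parameterization,
injective on a period, absolutely continuous with integrable derivative. -/
structure JordanLoop where
  g : ℝ → ℂ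
  cont : Continuous g
  periodic : Function.Periodic g 1
  inj : Set.InjOn g (Set.Ico (0:ℝ) 1)
  deriv_integrable : IntervalIntegrable (deriv g) MeasureTheory.volume 0 1
  ftc : ∀ s t : ℝ, g t - g s = ∫ r in s..t, deriv g r

/-- `F` is a boundary-value function of `f` (radial limits a.e.). -/
def HasBoundaryValues (f : ℂ → ℂ) (F : ℝ → ℂ) : Prop :=
  ∀ᵐ θ : ℝ, RadialLimit f θ (F θ)

/-- Membership of a boundary function `F` in the Douglas algebra `H^∞[ū]`, the closed
subalgebra of `L^∞(∂𝔻)` generated by `H^∞` and `ū` (equivalently, the essential-uniform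
closure of `⋃_n ū^n H^∞`). -/
def MemDouglasAlg (u : ℂ → ℂ) (F : ℝ → ℂ) : Prop :=
  ∀ ε > (0:ℝ), ∃ (n : ℕ) (f : ℂ → ℂ) (fb ub : ℝ → ℂ),
    MemHinf f ∧ HasBoundaryValues f fb ∧ HasBoundaryValues u ub ∧
    ∀ᵐ θ : ℝ, ‖F θ - ((starRingEnd ℂ) (ub θ))^n * fb θ‖ ≤ ε

/-- Harmonic conjugation for complex-valued boundary functions (componentwise). -/
def IsConjugateFnC (s st : ℝ → ℂ) : Prop :=
  IsConjugateFn (fun θ => (s θ).re) (fun θ => (st θ).re) ∧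
  IsConjugateFn (fun θ => (s θ).im) (fun θ => (st θ).im)

/-- `‖F‖_{BMO} ≤ γ` via the Fefferman–Stein decomposition: `F = r + s̃ + c` with
`‖r‖_∞ + ‖s‖_∞ ≤ γ`. -/
def BMONormLE (F : ℝ → ℂ) (γ : ℝ) : Prop :=
  ∃ (r s st : ℝ → ℂ) (c : ℂ) (Mr Ms : ℝ), IsConjugateFnC s st ∧
    (∀ᵐ θ : ℝ, F θ = r θ + st θ + c) ∧
    (∀ᵐ θ : ℝ, ‖r θ‖ ≤ Mr) ∧ (∀ᵐ θ : ℝ, ‖s θ‖ ≤ Ms) ∧ Mr + Ms ≤ γ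

/-- `α_b(r)`: the infimum of `|b|` on the set of points at hyperbolic distance `> r`
from the zero sequence `zs`. -/
def alphaAt (b : ℂ → ℂ) (zs : ℕ → ℂ) (r : ℝ) : ℝ :=
  sInf {y : ℝ | ∃ z ∈ unitDisc, (∀ k, r < hypDist z (zs k)) ∧ y = ‖b z‖}

/-- `α_b(∞) = lim_{r→∞} α_b(r) = sup_r α_b(r)`. -/
def alphaInfty (b : ℂ → ℂ) (zs : ℕ → ℂ) : ℝ :=
  sSup {y : ℝ | ∃ r : ℝ, 0 < r ∧ y = alphaAt b zs r}


lemma norm_expI (θ : ℝ) : ‖expI θ‖ = 1 := by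
  simp [expI, Complex.norm_exp]

lemma mem_unitDisc_of {r : ℝ} (θ : ℝ) (h0 : 0 ≤ r) (h1 : r < 1) :
    ((r:ℂ) * expI θ) ∈ unitDisc := by
  have : ‖(r:ℂ) * expI θ‖ = r := by
    rw [norm_mul, norm_expI, Complex.norm_real, Real.norm_eq_abs, abs_of_nonneg h0, mul_one]
  rw [unitDisc, mem_ball_zero_iff, this]; exact h1

lemma isOpen_unitDisc : IsOpen unitDisc := Metric.isOpen_ball

lemma keyLemma (ψ : ℂ → ℂ) (hd : DifferentiableOn ℂ ψ unitDisc)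
    (B : ℝ) (hB : ∀ z ∈ unitDisc, ‖ψ z‖ ≤ B)
    (c : ℝ) (hc : 0 < c)
    (hbd : ∀ᵐ θ : ℝ, ∀ᶠ r : ℝ in 𝓝[<] (1:ℝ), ‖ψ ((r:ℂ) * expI θ)‖ ≤ c) :
    ∀ z ∈ unitDisc, ‖ψ z‖ ≤ c := by
  classical
  set B' := max B c with hB'_def
  have hB'0 : 0 < B' := lt_of_lt_of_le hc (le_max_right _ _)
  have hB' : ∀ z ∈ unitDisc, ‖ψ z‖ ≤ B' := fun z hz => (hB z hz).trans (le_max_left _ _)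
  have hψc : ContinuousOn ψ unitDisc := hd.continuousOn
  have hcont : ∀ x : ℝ, 0 ≤ x → x < 1 → Continuous fun θ : ℝ => ψ ((x:ℂ) * expI θ) := by
    intro x hx0 hx1
    apply hψc.comp_continuous
    · exact continuous_const.mul (Complex.continuous_exp.comp
        (Complex.continuous_ofReal.mul continuous_const))
    · exact fun θ => mem_unitDisc_of θ hx0 hx1
  -- the good sets
  set S : ℕ → Set ℝ := fun k =>
    ⋂ (q : ℚ) (_ : (1:ℝ) - 1/(k+1) < (q:ℝ) ∧ (q:ℝ) < 1),
      {θ : ℝ | ‖ψ (((q:ℝ):ℂ) * expI θ)‖ ≤ c}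
    with hS_def
  have hk1pos : ∀ k : ℕ, (0:ℝ) < (k:ℝ) + 1 := fun k => by positivity
  have hk1le : ∀ k : ℕ, (0:ℝ) ≤ 1 - 1/((k:ℝ)+1) := by
    intro k
    have h1 : 1/((k:ℝ)+1) ≤ 1 := by
      rw [div_le_one (hk1pos k)]; linarith [Nat.cast_nonneg (α := ℝ) k]
    linarith
  have hSmeas : ∀ k, MeasurableSet (S k) := by
    intro k
    apply MeasurableSet.iInter
    intro q
    apply MeasurableSet.iInter
    intro hq
    have hq0 : (0:ℝ) ≤ (q:ℝ) := le_trans (hk1le k) hq.1.le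
    have : {θ : ℝ | ‖ψ (((q:ℝ):ℂ) * expI θ)‖ ≤ c}
        = (fun θ : ℝ => ‖ψ (((q:ℝ):ℂ) * expI θ)‖) ⁻¹' (Iic c) := rfl
    rw [this]
    exact (((hcont (q:ℝ) hq0 hq.2).norm).measurable) measurableSet_Iic
  have hSk_real : ∀ k, ∀ θ ∈ S k, ∀ r : ℝ, 1 - 1/((k:ℝ)+1) < r → r < 1 →
      ‖ψ ((r:ℂ) * expI θ)‖ ≤ c := by
    intro k θ hθ r hr1 hr2
    by_contra hgt
    push_neg at hgt
    have hr0 : 0 < r := lt_of_le_of_lt (hk1le k) hr1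
    have hzd : ((r:ℂ) * expI θ) ∈ unitDisc := mem_unitDisc_of θ hr0.le hr2
    have hψat : ContinuousAt ψ ((r:ℂ) * expI θ) :=
      (hd.differentiableAt (isOpen_unitDisc.mem_nhds hzd)).continuousAt
    have hf : Continuous fun x : ℝ => (x:ℂ) * expI θ :=
      Complex.continuous_ofReal.mul continuous_const
    have hgat : ContinuousAt (fun x : ℝ => ‖ψ ((x:ℂ) * expI θ)‖) r :=
      (ContinuousAt.comp (x := r) hψat hf.continuousAt).norm
    rw [Metric.continuousAt_iff] at hgat
    obtain ⟨δ', hδ'0, hδ'⟩ := hgat (‖ψ ((r:ℂ) * expI θ)‖ - c) (by linarith)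
    have hlt : max (r - δ') (1 - 1/((k:ℝ)+1)) < r := max_lt (by linarith) hr1
    obtain ⟨q, hq1, hq2⟩ := exists_rat_btwn hlt
    have hq3 : (q:ℝ) < 1 := lt_trans hq2 hr2
    have hq4 : 1 - 1/((k:ℝ)+1) < (q:ℝ) := lt_of_le_of_lt (le_max_right _ _) hq1
    have hmem := hθ
    rw [hS_def, mem_iInter₂] at hmem
    have hqb : ‖ψ (((q:ℝ):ℂ) * expI θ)‖ ≤ c := hmem q ⟨hq4, hq3⟩
    have hdq : dist (q:ℝ) r < δ' := by
      rw [Real.dist_eq, abs_of_neg (by linarith : (q:ℝ) - r < 0)]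
      have := lt_of_le_of_lt (le_max_left (r - δ') (1 - 1/((k:ℝ)+1))) hq1
      linarith
    have := hδ' hdq
    rw [Real.dist_eq] at this
    have := abs_lt.1 this
    linarith [this.1]
  have hSmono : Monotone S := by
    intro k l hkl
    intro θ hθ
    rw [hS_def, mem_iInter₂] at hθ ⊢
    intro q hq
    apply hθ q
    refine ⟨lt_of_le_of_lt ?_ hq.1, hq.2⟩
    have : 1/((l:ℝ)+1) ≤ 1/((k:ℝ)+1) := by
      apply one_div_le_one_div_of_le (hk1pos k)
      have : (k:ℝ) ≤ (l:ℝ) := Nat.cast_le.2 hkl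
      linarith
    linarith
  have hae : ∀ᵐ θ : ℝ, ∃ k, θ ∈ S k := by
    filter_upwards [hbd] with θ hθ
    rw [eventually_nhdsWithin_iff, Metric.eventually_nhds_iff] at hθ
    obtain ⟨δ, hδ0, hδ⟩ := hθ
    obtain ⟨k, hk⟩ := exists_nat_one_div_lt hδ0
    refine ⟨k, ?_⟩
    rw [hS_def, mem_iInter₂]
    intro q hq
    apply hδ (y := (q:ℝ)) _ hq.2
    rw [Real.dist_eq, abs_of_neg (by linarith : (q:ℝ) - 1 < 0)]
    have := hq.1
    linarith
  set I2 : Set ℝ := Ioc (0:ℝ) (2*Real.pi) with hI2_def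
  set C : ℕ → Set ℝ := fun k => I2 \ S k with hC_def
  have hCfin : volume (C 0) ≠ ⊤ := by
    apply ne_top_of_le_ne_top _ (measure_mono (diff_subset))
    rw [hI2_def, Real.volume_Ioc]
    exact ENNReal.ofReal_ne_top
  have hCnull : volume (⋂ k, C k) = 0 := by
    refine measure_mono_null ?_ (ae_iff.1 hae)
    intro θ hθ
    rw [mem_iInter] at hθ
    intro hex
    obtain ⟨k, hk⟩ := hex
    exact (hθ k).2 hk
  have htend : Tendsto (fun k => volume (C k)) atTop (𝓝 0) := by
    have hanti : Antitone C := fun k l hkl => diff_subset_diff_right (hSmono hkl)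
    have := tendsto_measure_iInter_atTop (μ := volume) (s := C)
      (fun k => (measurableSet_Ioc.diff (hSmeas k)).nullMeasurableSet) hanti ⟨0, hCfin⟩
    rw [hCnull] at this
    exact this
  intro a ha
  have ha1 : ‖a‖ < 1 := by simpa [unitDisc, mem_ball_zero_iff] using ha
  have ha0 : (0:ℝ) ≤ ‖a‖ := norm_nonneg a
  have h2pi : (0:ℝ) < 2*Real.pi := Real.two_pi_pos
  set K0 : ℝ := ((2*Real.pi+1) * (2/(1-‖a‖))) / (2*Real.pi) with hK0_def
  have main : ∀ n : ℕ, 2*Real.pi * ‖ψ a‖^(n+1) ≤ (2*Real.pi+1) * (2/(1-‖a‖)) * c^(n+1) := by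
    intro n
    have hpos : (0:ENNReal) < ENNReal.ofReal (c^(n+1)/B'^(n+1)) :=
      ENNReal.ofReal_pos.2 (by positivity)
    obtain ⟨k, hk⟩ := (htend.eventually_lt_const hpos).exists
    set r := max ((1+‖a‖)/2) (1 - 1/(2*((k:ℝ)+1))) with hr_def
    have hr₁le : (1+‖a‖)/2 ≤ r := le_max_left _ _
    have hr0 : 0 < r := lt_of_lt_of_le (by linarith) hr₁le
    have hra : ‖a‖ < r := lt_of_lt_of_le (by linarith) hr₁le
    have h2k : 0 < 2*((k:ℝ)+1) := by positivity
    have hr1 : r < 1 := by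
      apply max_lt (by linarith)
      have : 0 < 1/(2*((k:ℝ)+1)) := by positivity
      linarith
    have hrk : 1 - 1/((k:ℝ)+1) < r := by
      apply lt_of_lt_of_le _ (le_max_right _ _)
      have h1 : 1/(2*((k:ℝ)+1)) < 1/((k:ℝ)+1) := by
        apply one_div_lt_one_div_of_lt (hk1pos k); linarith
      linarith
    have hsub : Metric.closedBall (0:ℂ) r ⊆ unitDisc := Metric.closedBall_subset_ball hr1
    have hdpow : DifferentiableOn ℂ (fun z => ψ z ^ (n+1)) unitDisc := hd.pow _
    have hdc : DiffContOnCl ℂ (fun z => ψ z ^ (n+1)) (Metric.ball 0 r) := by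
      constructor
      · exact hdpow.mono (Metric.ball_subset_closedBall.trans hsub)
      · rw [closure_ball (0:ℂ) (ne_of_gt hr0)]
        exact hdpow.continuousOn.mono hsub
    have hCau := hdc.circleIntegral_sub_inv_smul (w := a) (by rwa [mem_ball_zero_iff])
    have hL : 2*Real.pi * ‖ψ a‖^(n+1) = ‖∮ z in C(0, r), (z - a)⁻¹ • (ψ z ^ (n+1))‖ := by
      rw [hCau, norm_smul, norm_pow]
      norm_num [norm_mul, Complex.norm_I, Complex.norm_real, Real.norm_eq_abs,
        abs_of_pos Real.pi_pos]
    have hcm_eq : ∀ θ : ℝ, circleMap 0 r θ = (r:ℂ) * expI θ := by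
      intro θ; simp [circleMap, expI]
    have hcmd : ∀ θ : ℝ, circleMap 0 r θ ∈ unitDisc := fun θ => by
      rw [hcm_eq θ]; exact mem_unitDisc_of θ hr0.le hr1
    have hψcm : Continuous fun θ : ℝ => ψ (circleMap 0 r θ) :=
      hψc.comp_continuous (continuous_circleMap 0 r) hcmd
    set g : ℝ → ℝ := fun θ => ‖ψ (circleMap 0 r θ)‖^(n+1) with hg_def
    have hgc : Continuous g := (hψcm.norm).pow _
    have hcmnorm : ∀ θ : ℝ, ‖circleMap 0 r θ‖ = r := by
      intro θ
      rw [norm_circleMap_zero, abs_of_pos hr0]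
    have hzne : ∀ θ : ℝ, circleMap 0 r θ - a ≠ 0 := by
      intro θ
      apply sub_ne_zero.2
      intro hEq
      rw [← hEq, hcmnorm θ] at hra
      exact lt_irrefl _ hra
    have hlow : ∀ θ : ℝ, r - ‖a‖ ≤ ‖circleMap 0 r θ - a‖ := by
      intro θ
      have h1 : ‖circleMap 0 r θ‖ - ‖a‖ ≤ ‖circleMap 0 r θ - a‖ := norm_sub_norm_le _ _
      rwa [hcmnorm θ] at h1
    have hFnorm : ∀ θ : ℝ,
        ‖deriv (circleMap 0 r) θ • ((circleMap 0 r θ - a)⁻¹ • (ψ (circleMap 0 r θ))^(n+1))‖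
        ≤ (2/(1-‖a‖)) * g θ := by
      intro θ
      rw [norm_smul, norm_smul, norm_inv, norm_pow]
      have h1 : ‖deriv (circleMap 0 r) θ‖ = r := by
        rw [deriv_circleMap, norm_mul, Complex.norm_I, mul_one,
          norm_circleMap_zero, abs_of_pos hr0]
      rw [h1]
      have h2 : (1-‖a‖)/2 ≤ ‖circleMap 0 r θ - a‖ := by linarith [hlow θ]
      have h3 : (0:ℝ) < ‖circleMap 0 r θ - a‖ := lt_of_lt_of_le (by linarith) h2
      have h4 : r * ‖circleMap 0 r θ - a‖⁻¹ ≤ 2/(1-‖a‖) := by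
        have hxinv : ‖circleMap 0 r θ - a‖⁻¹ ≤ ((1-‖a‖)/2)⁻¹ :=
          inv_anti₀ (by linarith) h2
        calc r * ‖circleMap 0 r θ - a‖⁻¹ ≤ 1 * ((1-‖a‖)/2)⁻¹ :=
              mul_le_mul hr1.le hxinv (inv_nonneg.2 h3.le) (by norm_num)
          _ = 2/(1-‖a‖) := by rw [one_mul, inv_div]
      rw [← mul_assoc]
      exact mul_le_mul_of_nonneg_right h4 (pow_nonneg (norm_nonneg _) _)
    have hFcont : Continuous fun θ : ℝ =>
        deriv (circleMap 0 r) θ • ((circleMap 0 r θ - a)⁻¹ • (ψ (circleMap 0 r θ))^(n+1)) := by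
      simp only [deriv_circleMap]
      exact ((continuous_circleMap 0 r).mul continuous_const).smul
        ((((continuous_circleMap 0 r).sub continuous_const).inv₀ hzne).smul (hψcm.pow _))
    have hIneq1 : 2*Real.pi * ‖ψ a‖^(n+1) ≤ ∫ θ in (0:ℝ)..(2*Real.pi), (2/(1-‖a‖)) * g θ := by
      rw [hL, circleIntegral]
      calc ‖∫ θ in (0:ℝ)..(2*Real.pi),
            deriv (circleMap 0 r) θ • ((circleMap 0 r θ - a)⁻¹ • (ψ (circleMap 0 r θ))^(n+1))‖
          ≤ ∫ θ in (0:ℝ)..(2*Real.pi),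
            ‖deriv (circleMap 0 r) θ • ((circleMap 0 r θ - a)⁻¹ • (ψ (circleMap 0 r θ))^(n+1))‖ :=
            intervalIntegral.norm_integral_le_integral_norm (by positivity)
        _ ≤ ∫ θ in (0:ℝ)..(2*Real.pi), (2/(1-‖a‖)) * g θ := by
            apply intervalIntegral.integral_mono_on (by positivity)
              (hFcont.norm.intervalIntegrable _ _) ((continuous_const.mul hgc).intervalIntegrable _ _)
            intro θ _; exact hFnorm θ
    have hIeq : ∫ θ in (0:ℝ)..(2*Real.pi), (2/(1-‖a‖)) * g θ
        = (2/(1-‖a‖)) * ∫ θ in I2, g θ := by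
      rw [intervalIntegral.integral_const_mul, intervalIntegral.integral_of_le (by positivity),
        hI2_def]
    have hgint : IntegrableOn g I2 := hgc.integrableOn_Ioc
    have hsplit := integral_inter_add_diff (μ := volume) (s := I2) (t := S k) (hSmeas k) hgint
    have hI2vol : volume I2 = ENNReal.ofReal (2*Real.pi) := by
      rw [hI2_def, Real.volume_Ioc]; norm_num
    have hb1 : ∫ θ in I2 ∩ S k, g θ ≤ c^(n+1) * (2*Real.pi) := by
      have hfin : volume (I2 ∩ S k) < ⊤ :=
        lt_of_le_of_lt (measure_mono inter_subset_left)
          (by rw [hI2vol]; exact ENNReal.ofReal_lt_top)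
      have hple : ∀ θ ∈ I2 ∩ S k, ‖g θ‖ ≤ c^(n+1) := by
        intro θ hθ
        rw [Real.norm_eq_abs, abs_of_nonneg (by positivity)]
        apply pow_le_pow_left₀ (norm_nonneg _)
        rw [hcm_eq θ]
        exact hSk_real k θ hθ.2 r hrk hr1
      have h5 := norm_setIntegral_le_of_norm_le_const hfin hple
      have h6 : (volume (I2 ∩ S k)).toReal ≤ 2*Real.pi := by
        apply ENNReal.toReal_le_of_le_ofReal (by positivity)
        rw [← hI2vol]
        exact measure_mono inter_subset_left
      calc ∫ θ in I2 ∩ S k, g θ ≤ |∫ θ in I2 ∩ S k, g θ| := le_abs_self _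
        _ ≤ c^(n+1) * (volume (I2 ∩ S k)).toReal := by
            rw [← Real.norm_eq_abs]; exact h5
        _ ≤ c^(n+1) * (2*Real.pi) := mul_le_mul_of_nonneg_left h6 (by positivity)
    have hb2 : ∫ θ in I2 \ S k, g θ ≤ c^(n+1) := by
      have hfin : volume (I2 \ S k) < ⊤ :=
        lt_of_le_of_lt (measure_mono diff_subset)
          (by rw [hI2vol]; exact ENNReal.ofReal_lt_top)
      have hple : ∀ θ ∈ I2 \ S k, ‖g θ‖ ≤ B'^(n+1) := by
        intro θ hθ
        rw [Real.norm_eq_abs, abs_of_nonneg (by positivity)]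
        exact pow_le_pow_left₀ (norm_nonneg _) (hB' _ (hcmd θ)) _
      have h5 := norm_setIntegral_le_of_norm_le_const hfin hple
      have h6 : (volume (I2 \ S k)).toReal ≤ c^(n+1)/B'^(n+1) := by
        apply ENNReal.toReal_le_of_le_ofReal (by positivity)
        exact hk.le
      calc ∫ θ in I2 \ S k, g θ ≤ |∫ θ in I2 \ S k, g θ| := le_abs_self _
        _ ≤ B'^(n+1) * (volume (I2 \ S k)).toReal := by
            rw [← Real.norm_eq_abs]; exact h5
        _ ≤ B'^(n+1) * (c^(n+1)/B'^(n+1)) :=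
            mul_le_mul_of_nonneg_left h6 (by positivity)
        _ = c^(n+1) := by field_simp
    have hItot : ∫ θ in I2, g θ ≤ (2*Real.pi+1) * c^(n+1) := by
      rw [← hsplit]; nlinarith [hb1, hb2]
    calc 2*Real.pi * ‖ψ a‖^(n+1) ≤ ∫ θ in (0:ℝ)..(2*Real.pi), (2/(1-‖a‖)) * g θ := hIneq1
      _ = (2/(1-‖a‖)) * ∫ θ in I2, g θ := hIeq
      _ ≤ (2/(1-‖a‖)) * ((2*Real.pi+1) * c^(n+1)) :=
          mul_le_mul_of_nonneg_left hItot (div_nonneg (by norm_num) (by linarith))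
      _ = (2*Real.pi+1) * (2/(1-‖a‖)) * c^(n+1) := by ring
  by_contra hgt
  push_neg at hgt
  have hq1 : 1 < ‖ψ a‖ / c := (one_lt_div hc).2 hgt
  obtain ⟨N, hN⟩ := pow_unbounded_of_one_lt K0 hq1
  have hKn : (‖ψ a‖ / c)^(N+1) ≤ K0 := by
    rw [div_pow, div_le_iff₀ (pow_pos hc _), hK0_def, div_mul_eq_mul_div, le_div_iff₀ h2pi]
    nlinarith [main N]
  have hmono : K0 < (‖ψ a‖ / c)^(N+1) :=
    lt_of_lt_of_le hN (pow_le_pow_right₀ hq1.le (Nat.le_succ N))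
  linarith

set_option maxHeartbeats 1000000 in
lemma masterLemma (u h : ℝ → ℂ → ℂ)
    (hu : ∀ t ∈ Set.Icc (0:ℝ) 1, IsInner (u t))
    (hh : ∀ t ∈ Set.Icc (0:ℝ) 1, MemHinfInv (h t))
    (hc : ModPathContinuousOn (fun t w => u t w * h t w)) :
    ∀ t ∈ Set.Icc (0:ℝ) 1, ∀ ε > (0:ℝ), ∃ δ > (0:ℝ), ∀ s ∈ Set.Icc (0:ℝ) 1,
      |s - t| < δ → ∀ z ∈ unitDisc,
        |‖u s z‖ - ‖u t z‖| ≤ ε ∧ |‖h s z‖ - ‖h t z‖| ≤ ε := by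
  intro t ht ε hε
  have h0disc : (0:ℂ) ∈ unitDisc := Metric.mem_ball_self one_pos
  obtain ⟨⟨hud, Mu0, hMu0⟩, huae⟩ := hu t ht
  obtain ⟨⟨hhd, M0, hM0⟩, m, hm0, hml⟩ := hh t ht
  set Mu := max Mu0 1 with hMu_def
  set M := max M0 m with hM_def
  have hMu1 : (1:ℝ) ≤ Mu := le_max_right _ _
  have hMub : ∀ z ∈ unitDisc, ‖u t z‖ ≤ Mu := fun z hz => (hMu0 z hz).trans (le_max_left _ _)
  have hmM : m ≤ M := le_max_right _ _
  have hMb : ∀ z ∈ unitDisc, ‖h t z‖ ≤ M := fun z hz => (hM0 z hz).trans (le_max_left _ _)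
  have hM0' : (0:ℝ) < M := lt_of_lt_of_le hm0 hmM
  have hMu0' : (0:ℝ) < Mu := lt_of_lt_of_le one_pos hMu1
  set P := Mu * M / m with hP_def
  have hP1 : Mu ≤ P := by rw [hP_def, le_div_iff₀ hm0]; nlinarith
  have hP0 : (0:ℝ) < P := div_pos (mul_pos hMu0' hM0') hm0
  set K := 6 + 10*M + 20*P with hK_def
  have hK0 : (0:ℝ) < K := by positivity
  set η := min (1/30 : ℝ) (ε/K) with hη_def
  have hη0 : 0 < η := lt_min (by norm_num) (div_pos hε hK0)
  have hη30 : η ≤ 1/30 := min_le_left _ _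
  have hηK : η * K ≤ ε := by
    have h1 : η ≤ ε/K := min_le_right _ _
    calc η * K ≤ (ε/K) * K := mul_le_mul_of_nonneg_right h1 hK0.le
      _ = ε := div_mul_cancel₀ _ (ne_of_gt hK0)
  set ε₀ := η * m / 4 with hε₀_def
  have hε₀ : 0 < ε₀ := by rw [hε₀_def]; positivity
  obtain ⟨δ, hδ0, hδ⟩ := hc t ht ε₀ hε₀
  refine ⟨δ, hδ0, fun s hs hst => ?_⟩
  have hprod : ∀ z ∈ unitDisc, |‖u s z‖ * ‖h s z‖ - ‖u t z‖ * ‖h t z‖| ≤ ε₀ := by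
    intro z hz
    have := hδ s hs hst z hz
    simpa [norm_mul] using this
  obtain ⟨⟨hsd, Ms0, hMs0⟩, ms, hms0, hmsl⟩ := hh s hs
  obtain ⟨⟨husd, Mus, hMus⟩, husae⟩ := hu s hs
  have hhtne : ∀ z ∈ unitDisc, h t z ≠ 0 := by
    intro z hz h0
    have := hml z hz; rw [h0, norm_zero] at this; linarith
  have hhsne : ∀ z ∈ unitDisc, h s z ≠ 0 := by
    intro z hz h0
    have := hmsl z hz; rw [h0, norm_zero] at this; linarith
  have h5η : (0:ℝ) < 1 + 5*η := by linarith
  have hMs0nn : (0:ℝ) ≤ Ms0 := le_trans (norm_nonneg _) (hMs0 0 h0disc)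
  have hae2 : ∀ᵐ θ : ℝ,
      (∀ᶠ r : ℝ in 𝓝[<] (1:ℝ), ‖(fun z => h s z / h t z) ((r:ℂ) * expI θ)‖ ≤ 1+5*η)
      ∧ (∀ᶠ r : ℝ in 𝓝[<] (1:ℝ), ‖(fun z => h t z / h s z) ((r:ℂ) * expI θ)‖ ≤ 1+5*η) := by
    filter_upwards [huae, husae] with θ hθt hθs
    obtain ⟨Lt, hLt1, hLtl⟩ := hθt
    obtain ⟨Ls, hLs1, hLsl⟩ := hθs
    have hnt : Tendsto (fun r : ℝ => ‖u t ((r:ℂ) * expI θ)‖) (𝓝[<] (1:ℝ)) (𝓝 1) := by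
      have := hLtl.norm
      rwa [hLt1] at this
    have hns : Tendsto (fun r : ℝ => ‖u s ((r:ℂ) * expI θ)‖) (𝓝[<] (1:ℝ)) (𝓝 1) := by
      have := hLsl.norm
      rwa [hLs1] at this
    have E1 := hnt.eventually (eventually_ge_nhds (show 1-η < 1 by linarith))
    have E2 := hnt.eventually (eventually_le_nhds (show (1:ℝ) < 1+η by linarith))
    have E3 := hns.eventually (eventually_ge_nhds (show 1-η < 1 by linarith))
    have E4 := hns.eventually (eventually_le_nhds (show (1:ℝ) < 1+η by linarith))
    have E5 : ∀ᶠ r : ℝ in 𝓝[<] (1:ℝ), 0 < r :=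
      eventually_nhdsWithin_of_eventually_nhds (eventually_gt_nhds (by norm_num))
    have E6 : ∀ᶠ r : ℝ in 𝓝[<] (1:ℝ), r < 1 :=
      eventually_mem_nhdsWithin.mono (fun r hr => hr)
    constructor
    · filter_upwards [E1, E2, E3, E4, E5, E6] with r e1 e2 e3 e4 e5 e6
      have hzd : ((r:ℂ) * expI θ) ∈ unitDisc := mem_unitDisc_of θ e5.le e6
      have hp := hprod _ hzd
      have hp2 := (abs_le.1 hp).2
      have hHt := hml _ hzd
      have hHt0 : (0:ℝ) < ‖h t ((r:ℂ) * expI θ)‖ := lt_of_lt_of_le hm0 hHt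
      show ‖h s ((r:ℂ) * expI θ) / h t ((r:ℂ) * expI θ)‖ ≤ 1+5*η
      rw [norm_div, div_le_iff₀ hHt0]
      have hHs0 : (0:ℝ) ≤ ‖h s ((r:ℂ) * expI θ)‖ := norm_nonneg _
      have t1 : (1-η) * ‖h s ((r:ℂ) * expI θ)‖
          ≤ ‖u s ((r:ℂ) * expI θ)‖ * ‖h s ((r:ℂ) * expI θ)‖ :=
        mul_le_mul_of_nonneg_right e3 hHs0
      have t2 : ‖u t ((r:ℂ) * expI θ)‖ * ‖h t ((r:ℂ) * expI θ)‖
          ≤ (1+η) * ‖h t ((r:ℂ) * expI θ)‖ :=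
        mul_le_mul_of_nonneg_right e2 (norm_nonneg _)
      have t3 : η * m ≤ η * ‖h t ((r:ℂ) * expI θ)‖ := mul_le_mul_of_nonneg_left hHt hη0.le
      have c1 : (0:ℝ) < 1 - η := by linarith
      have t4 : ‖h s ((r:ℂ) * expI θ)‖ ≤ ((1+5*η/4)/(1-η)) * ‖h t ((r:ℂ) * expI θ)‖ := by
        rw [div_mul_eq_mul_div, le_div_iff₀ c1]
        have hε₀e : ε₀ = η * m / 4 := hε₀_def
        linarith [hp2, t1, t2, t3]
      have t5 : (1+5*η/4)/(1-η) ≤ 1+5*η := by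
        rw [div_le_iff₀ c1]; nlinarith
      exact le_trans t4 (mul_le_mul_of_nonneg_right t5 hHt0.le)
    · filter_upwards [E1, E2, E3, E4, E5, E6] with r e1 e2 e3 e4 e5 e6
      have hzd : ((r:ℂ) * expI θ) ∈ unitDisc := mem_unitDisc_of θ e5.le e6
      have hp := hprod _ hzd
      have hp1 := (abs_le.1 hp).1
      have hHt := hml _ hzd
      have hHs0 : (0:ℝ) < ‖h s ((r:ℂ) * expI θ)‖ := lt_of_lt_of_le hms0 (hmsl _ hzd)
      show ‖h t ((r:ℂ) * expI θ) / h s ((r:ℂ) * expI θ)‖ ≤ 1+5*η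
      rw [norm_div, div_le_iff₀ hHs0]
      have t1 : (1-η) * ‖h t ((r:ℂ) * expI θ)‖
          ≤ ‖u t ((r:ℂ) * expI θ)‖ * ‖h t ((r:ℂ) * expI θ)‖ :=
        mul_le_mul_of_nonneg_right e1 (norm_nonneg _)
      have t2 : ‖u s ((r:ℂ) * expI θ)‖ * ‖h s ((r:ℂ) * expI θ)‖
          ≤ (1+η) * ‖h s ((r:ℂ) * expI θ)‖ :=
        mul_le_mul_of_nonneg_right e4 hHs0.le
      have t3 : η * m ≤ η * ‖h t ((r:ℂ) * expI θ)‖ := mul_le_mul_of_nonneg_left hHt hη0.le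
      have c2 : (0:ℝ) < 1 - 5*η/4 := by linarith
      have t4 : ‖h t ((r:ℂ) * expI θ)‖ ≤ ((1+η)/(1-5*η/4)) * ‖h s ((r:ℂ) * expI θ)‖ := by
        rw [div_mul_eq_mul_div, le_div_iff₀ c2]
        have hε₀e : ε₀ = η * m / 4 := hε₀_def
        linarith [hp1, t1, t2, t3]
      have t5 : (1+η)/(1-5*η/4) ≤ 1+5*η := by
        rw [div_le_iff₀ c2]; nlinarith
      exact le_trans t4 (mul_le_mul_of_nonneg_right t5 hHs0.le)
  have hψ1 : ∀ z ∈ unitDisc, ‖h s z / h t z‖ ≤ 1+5*η := by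
    refine keyLemma (fun z => h s z / h t z) (hsd.div hhd hhtne) (Ms0/m) ?_ (1+5*η) h5η
      (hae2.mono fun θ hθ => hθ.1)
    intro z hz
    rw [norm_div]
    exact div_le_div₀ hMs0nn (hMs0 z hz) hm0 (hml z hz)
  have hψ2 : ∀ z ∈ unitDisc, ‖h t z / h s z‖ ≤ 1+5*η := by
    refine keyLemma (fun z => h t z / h s z) (hhd.div hsd hhsne) (M/ms) ?_ (1+5*η) h5η
      (hae2.mono fun θ hθ => hθ.2)
    intro z hz
    rw [norm_div]
    exact div_le_div₀ hM0'.le (hMb z hz) hms0 (hmsl z hz)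
  intro z hz
  have hHt : m ≤ ‖h t z‖ := hml z hz
  have hHt0 : (0:ℝ) < ‖h t z‖ := lt_of_lt_of_le hm0 hHt
  have hHtM : ‖h t z‖ ≤ M := hMb z hz
  have hHs0 : (0:ℝ) < ‖h s z‖ := lt_of_lt_of_le hms0 (hmsl z hz)
  have hBv : ‖u t z‖ ≤ Mu := hMub z hz
  have hq1 : ‖h s z‖ ≤ (1+5*η) * ‖h t z‖ := by
    have h' : ‖h s z / h t z‖ ≤ 1+5*η := hψ1 z hz
    rw [norm_div, div_le_iff₀ hHt0] at h'
    exact h'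
  have hq2 : ‖h t z‖ ≤ (1+5*η) * ‖h s z‖ := by
    have h' : ‖h t z / h s z‖ ≤ 1+5*η := hψ2 z hz
    rw [norm_div, div_le_iff₀ hHs0] at h'
    exact h'
  have hp := hprod z hz
  have hp1 := (abs_le.1 hp).1
  have hp2 := (abs_le.1 hp).2
  have tη : η * ‖h s z‖ ≤ 1/30 * ‖h s z‖ := mul_le_mul_of_nonneg_right hη30 hHs0.le
  have hHsm : m/2 ≤ ‖h s z‖ := by nlinarith [hq2, tη, hHt]
  have hPm : P * m = Mu * M := by rw [hP_def]; field_simp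
  have hA3 : ‖u s z‖ ≤ 2*P + 1 := by
    have t1 : ‖u s z‖*(m/2) ≤ ‖u s z‖*‖h s z‖ := mul_le_mul_of_nonneg_left hHsm (norm_nonneg _)
    have t2 : ‖u t z‖*‖h t z‖ ≤ Mu*M := mul_le_mul hBv hHtM (norm_nonneg _) (by linarith)
    have t3 : ε₀ ≤ m/2 := by rw [hε₀_def]; nlinarith [hm0.le]
    nlinarith [t1, t2, t3, hPm, hm0, hp2]
  have hup : ‖u s z‖ ≤ ‖u t z‖ + η*K := by
    have hmain : ‖u s z‖ * ‖h s z‖ ≤ (‖u t z‖ + η*K) * ‖h s z‖ := by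
      have t1 : ‖u t z‖*‖h t z‖ ≤ ‖u t z‖*((1+5*η)*‖h s z‖) :=
        mul_le_mul_of_nonneg_left hq2 (norm_nonneg _)
      have t2 : ‖u t z‖*(η*‖h s z‖) ≤ Mu*(η*‖h s z‖) :=
        mul_le_mul_of_nonneg_right hBv (mul_nonneg hη0.le hHs0.le)
      have t3 : Mu*(η*‖h s z‖) ≤ P*(η*‖h s z‖) :=
        mul_le_mul_of_nonneg_right hP1 (mul_nonneg hη0.le hHs0.le)
      have t4 : η*m ≤ η*(2*‖h s z‖) :=
        mul_le_mul_of_nonneg_left (by linarith) hη0.le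
      have hε₀e : ε₀ = η * m / 4 := hε₀_def
      nlinarith [hp2, t1, t2, t3, t4, mul_nonneg (mul_nonneg hη0.le hM0'.le) hHs0.le,
        mul_nonneg hη0.le hHs0.le]
    have := le_of_mul_le_mul_right hmain hHs0
    linarith
  have hlo : ‖u t z‖ ≤ ‖u s z‖ + η*K := by
    have hmain : ‖u t z‖ * ‖h t z‖ ≤ (‖u s z‖ + η*K) * ‖h t z‖ := by
      have t1 : ‖u s z‖*‖h s z‖ ≤ ‖u s z‖*((1+5*η)*‖h t z‖) :=
        mul_le_mul_of_nonneg_left hq1 (norm_nonneg _)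
      have t2 : ‖u s z‖*(η*‖h t z‖) ≤ (2*P+1)*(η*‖h t z‖) :=
        mul_le_mul_of_nonneg_right hA3 (mul_nonneg hη0.le hHt0.le)
      have t3 : η*m ≤ η*‖h t z‖ := mul_le_mul_of_nonneg_left hHt hη0.le
      have hε₀e : ε₀ = η * m / 4 := hε₀_def
      nlinarith [hp1, t1, t2, t3, mul_nonneg (mul_nonneg hη0.le hM0'.le) hHt0.le,
        mul_nonneg (mul_nonneg hη0.le hP0.le) hHt0.le]
    have := le_of_mul_le_mul_right hmain hHt0
    linarith
  constructor
  · rw [abs_le]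
    constructor
    · linarith [hlo, hηK]
    · linarith [hup, hηK]
  · rw [abs_le]
    have w1 : η * ‖h t z‖ ≤ η * M := mul_le_mul_of_nonneg_left hHtM hη0.le
    have w2 : η * ‖h s z‖ ≤ η * ((1+5*η)*‖h t z‖) := mul_le_mul_of_nonneg_left hq1 hη0.le
    have w3 : η * (η*‖h t z‖) ≤ 1/30 * (η*‖h t z‖) :=
      mul_le_mul_of_nonneg_right hη30 (mul_nonneg hη0.le hHt0.le)
    constructor
    · nlinarith [hq2, w1, w2, w3, hηK, mul_nonneg hη0.le hP0.le, hη0.le, hM0'.le,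
        mul_nonneg hη0.le hM0'.le]
    · nlinarith [hq1, w1, hηK, mul_nonneg hη0.le hP0.le, hη0.le, hM0'.le]

/-- Lemma: if `|u_t h_t|` varies continuously in `L^∞(𝔻)`, so do
`|u_t|` and `|h_t|`. -/
theorem statement_3 (u h : ℝ → ℂ → ℂ)
    (hu : ∀ t ∈ Set.Icc (0:ℝ) 1, IsInner (u t))
    (hh : ∀ t ∈ Set.Icc (0:ℝ) 1, MemHinfInv (h t))
    (hc : ModPathContinuousOn (fun t w => u t w * h t w)) :
    ModPathContinuousOn u ∧ ModPathContinuousOn h := by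
  have master := masterLemma u h hu hh hc
  constructor
  · intro t ht ε hε
    obtain ⟨δ, hδ0, hδ⟩ := master t ht ε hε
    exact ⟨δ, hδ0, fun s hs hst z hz => (hδ s hs hst z hz).1⟩
  · intro t ht ε hε
    obtain ⟨δ, hδ0, hδ⟩ := master t ht ε hε
    exact ⟨δ, hδ0, fun s hs hst z hz => (hδ s hs hst z hz).2⟩

end
end

section
/- Every Blaschke product b can be factorized as b = b₁b₂, where b₁ and b₂ are floating Blaschke products. -/
set_option maxHeartbeats 1000000


open MeasureTheory Filter Topology Set

noncomputable section

lemma bf_one (z : ℂ) : blaschkeFactor 1 z = 1 := by simp [blaschkeFactor]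

lemma conj_mul_self (a : ℂ) : (starRingEnd ℂ) a * a = ((‖a‖ : ℂ))^2 := by
  rw [mul_comm, Complex.mul_conj]
  norm_cast
  rw [Complex.sq_norm]

lemma normSq_identity (a z : ℂ) :
    ‖1 - (starRingEnd ℂ) a * z‖^2 - ‖a - z‖^2 = (1 - ‖a‖^2) * (1 - ‖z‖^2) := by
  simp only [Complex.sq_norm, Complex.normSq_apply, Complex.sub_re,
    Complex.sub_im, Complex.mul_re, Complex.mul_im, Complex.one_re, Complex.one_im,
    Complex.conj_re, Complex.conj_im]
  ring

lemma denom_norm_ge (a z : ℂ) : 1 - ‖a‖ * ‖z‖ ≤ ‖1 - (starRingEnd ℂ) a * z‖ := by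
  calc 1 - ‖a‖ * ‖z‖ = ‖(1:ℂ)‖ - ‖(starRingEnd ℂ) a * z‖ := by simp [norm_mul]
    _ ≤ ‖1 - (starRingEnd ℂ) a * z‖ := norm_sub_norm_le _ _

lemma denom_ne_zero {a z : ℂ} (h : ‖a‖ * ‖z‖ < 1) : 1 - (starRingEnd ℂ) a * z ≠ 0 := by
  intro hc
  have := denom_norm_ge a z
  rw [hc] at this
  simp only [norm_zero] at this
  linarith

lemma norm_bf_eq {a z : ℂ} (ha : ‖a‖ < 1) (ha0 : a ≠ 0) :
    ‖blaschkeFactor a z‖ = ‖a - z‖ / ‖1 - (starRingEnd ℂ) a * z‖ := by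
  have hna : ‖a‖ ≠ 0 := by simpa using ha0
  rw [blaschkeFactor, if_pos ha, if_neg ha0]
  rw [norm_mul, norm_div, norm_div]
  have h1 : ‖(starRingEnd ℂ) a‖ = ‖a‖ := RCLike.norm_conj a
  have h2 : ‖((‖a‖ : ℝ) : ℂ)‖ = ‖a‖ := by
    rw [Complex.norm_real]; exact abs_of_nonneg (norm_nonneg a)
  rw [h1, h2, div_self hna, one_mul]

lemma norm_bf_le_one {a z : ℂ} (hz : ‖z‖ < 1) : ‖blaschkeFactor a z‖ ≤ 1 := by
  by_cases ha : ‖a‖ < 1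
  · by_cases ha0 : a = 0
    · subst ha0; rw [blaschkeFactor, if_pos (by norm_num), if_pos rfl]; exact hz.le
    · rw [norm_bf_eq ha ha0]
      have hid := normSq_identity a z
      have ha2 : ‖a‖^2 < 1 := by nlinarith [norm_nonneg a]
      have hz2 : ‖z‖^2 < 1 := by nlinarith [norm_nonneg z]
      have h1 : (0:ℝ) ≤ (1 - ‖a‖^2) * (1 - ‖z‖^2) := by nlinarith
      have h2 : ‖a - z‖ ≤ ‖1 - (starRingEnd ℂ) a * z‖ := by
        nlinarith [norm_nonneg (a - z), norm_nonneg (1 - (starRingEnd ℂ) a * z)]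
      have hd : (0:ℝ) < ‖1 - (starRingEnd ℂ) a * z‖ := by
        have := denom_norm_ge a z
        nlinarith [norm_nonneg a, norm_nonneg z]
      exact div_le_one_of_le₀ h2 hd.le
  · rw [blaschkeFactor, if_neg ha]; simp

lemma bf_sub_one_eq {a z : ℂ} (ha : ‖a‖ < 1) (ha0 : a ≠ 0) (hz : ‖z‖ < 1) :
    blaschkeFactor a z - 1 =
      (((‖a‖:ℂ) - 1) * ((‖a‖:ℂ) + (starRingEnd ℂ) a * z)) /
        ((‖a‖:ℂ) * (1 - (starRingEnd ℂ) a * z)) := by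
  have hden : 1 - (starRingEnd ℂ) a * z ≠ 0 := by
    apply denom_ne_zero
    nlinarith [norm_nonneg a, norm_nonneg z]
  have hna : ((‖a‖:ℂ)) ≠ 0 := by
    simp only [ne_eq, Complex.ofReal_eq_zero, norm_eq_zero]; exact ha0
  have key := conj_mul_self a
  rw [blaschkeFactor, if_pos ha, if_neg ha0, eq_div_iff (mul_ne_zero hna hden),
    sub_mul, div_mul_div_comm, div_mul_eq_mul_div, mul_comm ((‖a‖:ℂ)) (1 - (starRingEnd ℂ) a * z),
    mul_div_cancel_right₀ _ (mul_ne_zero hden hna)]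
  linear_combination key

/-- Lemma U -/
lemma norm_bf_sub_one_le {a z : ℂ} (ha1 : ‖a‖ ≤ 1) (hz : ‖z‖ < 1) :
    ‖blaschkeFactor a z - 1‖ ≤ 2 * (1 - ‖a‖) / (1 - ‖z‖) := by
  have hz0 : (0:ℝ) < 1 - ‖z‖ := by linarith
  by_cases ha : ‖a‖ < 1
  · by_cases ha0 : a = 0
    · subst ha0
      rw [blaschkeFactor, if_pos (by norm_num), if_pos rfl]
      have : ‖z - 1‖ ≤ 1 + ‖z‖ := by
        calc ‖z - 1‖ ≤ ‖z‖ + ‖(1:ℂ)‖ := norm_sub_le _ _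
          _ = ‖z‖ + 1 := by rw [norm_one]
          _ ≤ 1 + ‖z‖ := by linarith
      have h2 : 1 + ‖z‖ ≤ 2 / (1 - ‖z‖) := by
        rw [le_div_iff₀ hz0]
        nlinarith [norm_nonneg z]
      simp only [norm_zero]
      calc ‖z - 1‖ ≤ 1 + ‖z‖ := this
        _ ≤ 2 / (1 - ‖z‖) := h2
        _ = 2 * (1 - 0) / (1 - ‖z‖) := by ring
    · rw [bf_sub_one_eq ha ha0 hz]
      have hna : (0:ℝ) < ‖a‖ := norm_pos_iff.mpr ha0
      have hden : (0:ℝ) < ‖1 - (starRingEnd ℂ) a * z‖ := by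
        have := denom_norm_ge a z
        nlinarith [norm_nonneg a, norm_nonneg z]
      rw [norm_div, norm_mul, norm_mul]
      have e1 : ‖((‖a‖:ℂ)) - 1‖ = 1 - ‖a‖ := by
        rw [← Complex.ofReal_one, ← Complex.ofReal_sub, Complex.norm_real, Real.norm_eq_abs,
          abs_of_nonpos (by linarith)]; ring
      have e2 : ‖((‖a‖:ℂ))‖ = ‖a‖ := by
        rw [Complex.norm_real]; exact abs_of_nonneg (norm_nonneg a)
      have e3 : ‖((‖a‖:ℂ)) + (starRingEnd ℂ) a * z‖ ≤ 2 * ‖a‖ := by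
        calc ‖((‖a‖:ℂ)) + (starRingEnd ℂ) a * z‖ ≤ ‖((‖a‖:ℂ))‖ + ‖(starRingEnd ℂ) a * z‖ :=
              norm_add_le _ _
          _ = ‖a‖ + ‖a‖ * ‖z‖ := by rw [e2, norm_mul, RCLike.norm_conj]
          _ ≤ 2 * ‖a‖ := by nlinarith [norm_nonneg a]
      have e4 : 1 - ‖z‖ ≤ ‖1 - (starRingEnd ℂ) a * z‖ := by
        have := denom_norm_ge a z
        nlinarith [norm_nonneg a, norm_nonneg z]
      rw [e1, e2]
      rw [div_le_div_iff₀ (by positivity) hz0]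
      have hn1 : ‖((‖a‖:ℂ)) + (starRingEnd ℂ) a * z‖ ≥ 0 := norm_nonneg _
      nlinarith [mul_le_mul e3 e4 hz0.le (by positivity : (0:ℝ) ≤ 2 * ‖a‖)]
  · have hae : ‖a‖ = 1 := le_antisymm ha1 (not_lt.mp ha)
    rw [blaschkeFactor, if_neg ha, hae]
    simp [hz0.le]

/-- Lemma T -/
lemma one_sub_norm_bf_le {a z : ℂ} (ha1 : ‖a‖ ≤ 1) (hz : ‖z‖ < 1) :
    1 - ‖blaschkeFactor a z‖ ≤ 4 * (1 - ‖a‖) * (1 - ‖z‖) / (1 - ‖a‖ * ‖z‖)^2 := by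
  have hd0 : (0:ℝ) < 1 - ‖a‖ * ‖z‖ := by nlinarith [norm_nonneg a, norm_nonneg z]
  by_cases ha : ‖a‖ < 1
  · by_cases ha0 : a = 0
    · subst ha0
      rw [blaschkeFactor, if_pos (by norm_num), if_pos rfl]
      simp only [norm_zero]
      have h9 : (1 - (0:ℝ) * ‖z‖)^2 = 1 := by ring
      rw [h9]
      nlinarith [norm_nonneg z]
    · rw [norm_bf_eq ha ha0]
      set n := ‖a - z‖ with hn
      set D := ‖1 - (starRingEnd ℂ) a * z‖ with hD
      have hid : D^2 - n^2 = (1 - ‖a‖^2) * (1 - ‖z‖^2) := normSq_identity a z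
      have hDpos : (0:ℝ) < D := by
        have := denom_norm_ge a z; rw [← hD] at this; linarith
      have hn0 : (0:ℝ) ≤ n := norm_nonneg _
      have hA2 : ‖a‖^2 < 1 := by nlinarith [norm_nonneg a]
      have hZ2 : ‖z‖^2 < 1 := by nlinarith [norm_nonneg z]
      have hpos : (0:ℝ) < (1 - ‖a‖^2) * (1 - ‖z‖^2) := by nlinarith
      have hnD : n ≤ D := by nlinarith
      have hDd : 1 - ‖a‖ * ‖z‖ ≤ D := by
        have := denom_norm_ge a z; rw [← hD] at this; linarith
      have step1 : 1 - n / D ≤ (D^2 - n^2) / D^2 := by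
        have h1 : (D^2 - n^2)/D^2 = 1 - (n/D)^2 := by field_simp
        rw [h1]
        have h2 : 0 ≤ n/D := div_nonneg hn0 hDpos.le
        have h3 : n/D ≤ 1 := by rw [div_le_one hDpos]; exact hnD
        nlinarith
      have step2 : (D^2 - n^2) / D^2 ≤ (1 - ‖a‖^2) * (1 - ‖z‖^2) / (1 - ‖a‖ * ‖z‖)^2 := by
        rw [hid]
        apply div_le_div_of_nonneg_left _ (by positivity) _
        · nlinarith [norm_nonneg a, norm_nonneg z]
        · nlinarith
      have step3 : (1 - ‖a‖^2) * (1 - ‖z‖^2) / (1 - ‖a‖ * ‖z‖)^2 ≤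
          4 * (1 - ‖a‖) * (1 - ‖z‖) / (1 - ‖a‖ * ‖z‖)^2 := by
        apply div_le_div_of_nonneg_right _ (by positivity)
        have h4 : (1+‖a‖)*(1+‖z‖) ≤ 4 := by nlinarith [norm_nonneg a, norm_nonneg z]
        have h5 : (0:ℝ) ≤ (1-‖a‖)*(1-‖z‖) := mul_nonneg (by linarith) (by linarith)
        nlinarith [mul_le_mul_of_nonneg_left h4 h5]
      linarith
  · have hae : ‖a‖ = 1 := le_antisymm ha1 (not_lt.mp ha)
    rw [blaschkeFactor, if_neg ha, hae]
    simp

lemma norm_prod_sub_one_le {g : ℕ → ℂ} (G : Finset ℕ) :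
    ‖(∏ i ∈ G, g i) - 1‖ ≤ Real.exp (∑ i ∈ G, ‖g i - 1‖) - 1 := by
  classical
  induction G using Finset.induction_on with
  | empty => simp
  | insert a G' ha ih =>
    rw [Finset.prod_insert ha, Finset.sum_insert ha]
    have hP : ‖∏ i ∈ G', g i‖ ≤ Real.exp (∑ i ∈ G', ‖g i - 1‖) := by
      calc ‖∏ i ∈ G', g i‖ ≤ ‖(∏ i ∈ G', g i) - 1‖ + ‖(1:ℂ)‖ := by
            have := norm_sub_le ((∏ i ∈ G', g i) - 1) (-1)
            simpa [sub_neg_eq_add] using norm_add_le ((∏ i ∈ G', g i) - 1) 1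
        _ ≤ Real.exp (∑ i ∈ G', ‖g i - 1‖) - 1 + 1 := by rw [norm_one]; linarith
        _ = Real.exp (∑ i ∈ G', ‖g i - 1‖) := by ring
    have key : g a * ∏ i ∈ G', g i - 1 =
        (g a - 1) * (∏ i ∈ G', g i) + ((∏ i ∈ G', g i) - 1) := by ring
    rw [key]
    have h1 : ‖(g a - 1) * (∏ i ∈ G', g i) + ((∏ i ∈ G', g i) - 1)‖ ≤
        ‖g a - 1‖ * ‖∏ i ∈ G', g i‖ + ‖(∏ i ∈ G', g i) - 1‖ := by
      calc _ ≤ ‖(g a - 1) * (∏ i ∈ G', g i)‖ + ‖(∏ i ∈ G', g i) - 1‖ := norm_add_le _ _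
        _ = _ := by rw [norm_mul]
    have he : ‖g a - 1‖ + 1 ≤ Real.exp ‖g a - 1‖ := Real.add_one_le_exp _
    have hexp : Real.exp (‖g a - 1‖ + ∑ i ∈ G', ‖g i - 1‖) =
        Real.exp ‖g a - 1‖ * Real.exp (∑ i ∈ G', ‖g i - 1‖) := Real.exp_add _ _
    have hEpos : (0:ℝ) < Real.exp (∑ i ∈ G', ‖g i - 1‖) := Real.exp_pos _
    nlinarith [norm_nonneg (g a - 1), norm_nonneg ((∏ i ∈ G', g i) - 1),
      mul_le_mul_of_nonneg_left hP (norm_nonneg (g a - 1))]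

lemma multipliable_of_summable {g : ℕ → ℂ} (h : Summable fun n => ‖g n - 1‖) :
    Multipliable g := by
  classical
  set S := ∑' n, ‖g n - 1‖ with hS
  have hS0 : 0 ≤ S := tsum_nonneg (fun n => norm_nonneg _)
  suffices hc : CauchySeq (fun F : Finset ℕ => ∏ i ∈ F, g i) by
    obtain ⟨a, ha⟩ := cauchySeq_tendsto_of_complete hc
    exact ⟨a, ha⟩
  rw [Metric.cauchySeq_iff']
  intro ε hε
  set δ := Real.log (1 + ε / (2 * Real.exp S)) with hδ
  have hfrac : 0 < ε / (2 * Real.exp S) := by positivity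
  have hδ0 : 0 < δ := Real.log_pos (by linarith)
  obtain ⟨F₀, hF₀⟩ := h.vanishing (Metric.ball_mem_nhds 0 hδ0)
  refine ⟨F₀, fun F hF => ?_⟩
  have hsplit : ∏ i ∈ F, g i = (∏ i ∈ F \ F₀, g i) * ∏ i ∈ F₀, g i :=
    (Finset.prod_sdiff hF).symm
  rw [dist_eq_norm, hsplit]
  have h1 : (∏ i ∈ F \ F₀, g i) * (∏ i ∈ F₀, g i) - (∏ i ∈ F₀, g i)
      = ((∏ i ∈ F \ F₀, g i) - 1) * ∏ i ∈ F₀, g i := by ring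
  rw [h1, norm_mul]
  have h2 : ‖(∏ i ∈ F \ F₀, g i) - 1‖ ≤ Real.exp (∑ i ∈ F \ F₀, ‖g i - 1‖) - 1 :=
    norm_prod_sub_one_le _
  have h3 : ∑ i ∈ F \ F₀, ‖g i - 1‖ < δ := by
    have := hF₀ (F \ F₀) (Finset.sdiff_disjoint)
    rw [Metric.mem_ball, Real.dist_eq, sub_zero] at this
    calc ∑ i ∈ F \ F₀, ‖g i - 1‖ ≤ |∑ i ∈ F \ F₀, ‖g i - 1‖| := le_abs_self _
      _ < δ := this
  have h4 : ‖∏ i ∈ F₀, g i‖ ≤ Real.exp S := by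
    calc ‖∏ i ∈ F₀, g i‖ ≤ Real.exp (∑ i ∈ F₀, ‖g i - 1‖) := by
          have := norm_prod_sub_one_le (g := g) F₀
          have h5 := norm_add_le ((∏ i ∈ F₀, g i) - 1) 1
          simp only [sub_add_cancel] at h5
          rw [norm_one] at h5
          linarith
      _ ≤ Real.exp S := by
          apply Real.exp_le_exp.mpr
          exact Summable.sum_le_tsum F₀ (fun i _ => norm_nonneg _) h
  have h6 : ‖(∏ i ∈ F \ F₀, g i) - 1‖ < Real.exp δ - 1 := by
    have := Real.exp_lt_exp.mpr h3
    linarith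
  have h7 : Real.exp δ = 1 + ε / (2 * Real.exp S) := by
    rw [hδ, Real.exp_log (by linarith)]
  have hEpos : (0:ℝ) < Real.exp S := Real.exp_pos _
  calc ‖(∏ i ∈ F \ F₀, g i) - 1‖ * ‖∏ i ∈ F₀, g i‖
      ≤ (Real.exp δ - 1) * Real.exp S := by
        apply mul_le_mul h6.le h4 (norm_nonneg _) (by linarith)
    _ = ε / 2 := by rw [h7]; field_simp; ring
    _ < ε := by linarith

lemma finset_prod_norm_ge {g : ℕ → ℂ} (F : Finset ℕ) (hle : ∀ n, ‖g n‖ ≤ 1) :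
    1 - (∑ i ∈ F, (1 - ‖g i‖)) ≤ ∏ i ∈ F, ‖g i‖ := by
  classical
  induction F using Finset.induction_on with
  | empty => simp
  | insert a F' ha ih =>
    rw [Finset.prod_insert ha, Finset.sum_insert ha]
    have h1 : (0:ℝ) ≤ ‖g a‖ := norm_nonneg _
    have h2 : ∑ i ∈ F', (1 - ‖g i‖) ≥ 0 := Finset.sum_nonneg (fun i _ => by
      have := hle i; linarith)
    have h3 : (0:ℝ) ≤ ∏ i ∈ F', ‖g i‖ := Finset.prod_nonneg (fun i _ => norm_nonneg _)
    nlinarith [hle a]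

lemma hasProd_norm_bounds {g : ℕ → ℂ} {P : ℂ} (hP : HasProd g P)
    (hle : ∀ n, ‖g n‖ ≤ 1) (hs : Summable fun n => 1 - ‖g n‖) :
    1 - (∑' n, (1 - ‖g n‖)) ≤ ‖P‖ ∧ ‖P‖ ≤ 1 := by
  have htend : Tendsto (fun F : Finset ℕ => ‖∏ i ∈ F, g i‖) atTop (nhds ‖P‖) :=
    (continuous_norm.tendsto P).comp hP
  constructor
  · apply ge_of_tendsto htend
    filter_upwards with F
    calc 1 - (∑' n, (1 - ‖g n‖)) ≤ 1 - ∑ i ∈ F, (1 - ‖g i‖) := by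
          have := Summable.sum_le_tsum F (fun i _ => by have := hle i; linarith) hs
          linarith
      _ ≤ ∏ i ∈ F, ‖g i‖ := finset_prod_norm_ge F hle
      _ = ‖∏ i ∈ F, g i‖ := (norm_prod F g).symm
  · apply le_of_tendsto htend
    filter_upwards with F
    rw [norm_prod]
    exact Finset.prod_le_one (fun i _ => norm_nonneg _) (fun i _ => hle i)

section main
variable {zs : ℕ → ℂ}

lemma t_nonneg (hzs : ∀ n, ‖zs n‖ ≤ 1) (n : ℕ) : 0 ≤ 1 - ‖zs n‖ := by
  have := hzs n; linarith

lemma tail_small (hzs : ∀ n, ‖zs n‖ ≤ 1) (ht : Summable fun n => 1 - ‖zs n‖)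
    {ε : ℝ} (hε : 0 < ε) {m : ℝ} (hm : m < 1) :
    ∃ q : ℝ, m < q ∧ q < 1 ∧ (∑' n, if q ≤ ‖zs n‖ then 1 - ‖zs n‖ else 0) ≤ ε := by
  classical
  set t : ℕ → ℝ := fun n => 1 - ‖zs n‖ with htdef
  obtain ⟨N, hN⟩ := (ht.hasSum.tendsto_sum_nat.eventually
    (lt_mem_nhds (show (∑' n, t n) - ε < ∑' n, t n by linarith))).exists
  set T : Finset ℕ := (Finset.range N).filter (fun i => ‖zs i‖ < 1) with hT
  set cand : Finset ℝ := insert m (T.image (fun i => ‖zs i‖)) with hcand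
  have hne : cand.Nonempty := ⟨m, Finset.mem_insert_self _ _⟩
  set M : ℝ := cand.max' hne with hM
  have hM1 : M < 1 := by
    rw [hM, Finset.max'_lt_iff]
    intro b hb
    rw [hcand, Finset.mem_insert] at hb
    rcases hb with rfl | hb
    · exact hm
    · obtain ⟨i, hi, rfl⟩ := Finset.mem_image.mp hb
      exact (Finset.mem_filter.mp hi).2
  have hmM : m ≤ M := Finset.le_max' _ m (Finset.mem_insert_self _ _)
  refine ⟨(M + 1)/2, by linarith, by linarith, ?_⟩
  have hqM : M < (M+1)/2 := by linarith
  -- pointwise bound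
  have hpw : ∀ n, (if (M+1)/2 ≤ ‖zs n‖ then t n else 0) ≤
      (if n ∈ Finset.range N then 0 else t n) := by
    intro n
    by_cases hn : n ∈ Finset.range N
    · rw [if_pos hn]
      by_cases h1 : ‖zs n‖ < 1
      · have hmem : n ∈ T := Finset.mem_filter.mpr ⟨hn, h1⟩
        have : ‖zs n‖ ≤ M := Finset.le_max' cand ‖zs n‖ (Finset.mem_insert_of_mem
          (Finset.mem_image_of_mem (fun i => ‖zs i‖) hmem))
        rw [if_neg (by linarith)]
      · have : ‖zs n‖ = 1 := le_antisymm (hzs n) (not_lt.mp h1)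
        have ht0 : t n = 0 := by rw [htdef]; simp [this]
        split_ifs <;> simp [ht0]
    · rw [if_neg hn]
      split_ifs
      · exact le_refl _
      · exact t_nonneg hzs n
  have hs2 : Summable (fun n => if n ∈ Finset.range N then 0 else t n) := by
    apply Summable.of_nonneg_of_le _ _ ht
    · intro n; split_ifs; exacts [le_refl 0, t_nonneg hzs n]
    · intro n; split_ifs; exacts [t_nonneg hzs n, le_refl _]
  have hs1 : Summable (fun n => if (M+1)/2 ≤ ‖zs n‖ then t n else 0) := by
    apply Summable.of_nonneg_of_le _ hpw hs2
    intro n; split_ifs; exacts [t_nonneg hzs n, le_refl 0]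
  have hsum2 : (∑' n, if n ∈ Finset.range N then 0 else t n) ≤ ε := by
    have hsplit : ∀ n, t n = (if n ∈ Finset.range N then t n else 0) +
        (if n ∈ Finset.range N then 0 else t n) := by
      intro n; split_ifs <;> ring
    have hsA : Summable (fun n => if n ∈ Finset.range N then t n else 0) :=
      summable_of_ne_finset_zero (s := Finset.range N) (fun n hn => if_neg hn)
    have htot : ∑' n, t n = (∑' n, if n ∈ Finset.range N then t n else 0) +
        (∑' n, if n ∈ Finset.range N then 0 else t n) := by
      rw [← Summable.tsum_add hsA hs2]
      exact tsum_congr hsplit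
    have hfin : (∑' n, if n ∈ Finset.range N then t n else 0) = ∑ i ∈ Finset.range N, t i := by
      rw [tsum_eq_sum (s := Finset.range N) (fun n hn => if_neg hn)]
      exact Finset.sum_congr rfl (fun i hi => if_pos hi)
    rw [hfin] at htot
    linarith
  calc (∑' n, if (M+1)/2 ≤ ‖zs n‖ then t n else 0)
      ≤ (∑' n, if n ∈ Finset.range N then 0 else t n) := Summable.tsum_le_tsum hpw hs1 hs2
    _ ≤ ε := hsum2

lemma low_finite (hzs : ∀ n, ‖zs n‖ ≤ 1) (ht : Summable fun n => 1 - ‖zs n‖)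
    {q : ℝ} (hq : q < 1) : ∃ N : ℕ, ∀ n, ‖zs n‖ < q → n ∈ Finset.range N := by
  have h0 : (0:ℝ) < 1 - q := by linarith
  have := ht.tendsto_atTop_zero.eventually (gt_mem_nhds h0)
  rw [eventually_atTop] at this
  obtain ⟨N, hN⟩ := this
  refine ⟨N, fun n hn => ?_⟩
  rw [Finset.mem_range]
  by_contra hc
  have := hN n (not_lt.mp hc)
  linarith

lemma exists_next (hzs : ∀ n, ‖zs n‖ ≤ 1) (ht : Summable fun n => 1 - ‖zs n‖)
    (q : ℝ) (hq : 1/2 ≤ q) (hq1 : q < 1) (k : ℕ) :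
    ∃ ρ q' : ℝ, (1/2 ≤ q' ∧ q' < 1) ∧ q < ρ ∧ ρ < q' ∧ 1 - 1/(k+1 : ℝ) ≤ ρ ∧
      ∀ zs' : ℕ → ℂ, (∀ n, (zs' n = zs n ∧ (‖zs n‖ < q ∨ q' ≤ ‖zs n‖)) ∨ zs' n = 1) →
        ∀ z : ℂ, ‖z‖ = ρ →
        (∑' n, (1 - ‖blaschkeFactor (zs' n) z‖)) ≤ 4 / (k+1 : ℝ) := by
  classical
  set t : ℕ → ℝ := fun n => 1 - ‖zs n‖ with htdef
  have hk1 : (0:ℝ) < (k:ℝ) + 1 := by positivity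
  obtain ⟨N, hN⟩ := low_finite hzs ht hq1
  set W : ℝ := ∑ i ∈ Finset.range N, (if ‖zs i‖ < q then (1 - ‖zs i‖)⁻¹ else 0) with hW
  have hW0 : 0 ≤ W := Finset.sum_nonneg (fun i _ => by
    split_ifs with h
    · have : 0 < 1 - ‖zs i‖ := by linarith
      positivity
    · exact le_refl 0)
  set m : ℝ := min ((1-q)/2) (1/(((k:ℝ)+1)*(4*W+4))) with hm
  have hm0 : 0 < m := by
    apply lt_min (by linarith)
    positivity
  have hmq : m < 1 - q := by
    have := min_le_left ((1-q)/2) (1/(((k:ℝ)+1)*(4*W+4)))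
    rw [← hm] at this; linarith
  have hmk : m ≤ 1/((k:ℝ)+1) := by
    have h1 := min_le_right ((1-q)/2) (1/(((k:ℝ)+1)*(4*W+4)))
    rw [← hm] at h1
    have h2 : 1/(((k:ℝ)+1)*(4*W+4)) ≤ 1/((k:ℝ)+1) := by
      apply one_div_le_one_div_of_le hk1
      nlinarith
    linarith
  have hmW : 4*m*W ≤ 1/((k:ℝ)+1) := by
    have hd : 0 < ((k:ℝ)+1)*(4*W+4) := by positivity
    have h1 : m * (((k:ℝ)+1)*(4*W+4)) ≤ 1 := by
      rw [← le_div_iff₀ hd]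
      exact min_le_right _ _
    rw [le_div_iff₀ hk1]
    nlinarith [mul_nonneg hm0.le hk1.le]
  set ρ : ℝ := 1 - m with hρ
  have hρ1 : ρ < 1 := by rw [hρ]; linarith
  have hqρ : q < ρ := by rw [hρ]; linarith
  have hρhalf : 1/2 ≤ ρ := by linarith
  obtain ⟨q', hq'1, hq'2, hq'3⟩ := tail_small hzs ht
    (show (0:ℝ) < m/(16*((k:ℝ)+1)) by positivity) hρ1
  refine ⟨ρ, q', ⟨by linarith, hq'2⟩, hqρ, hq'1, ?_, ?_⟩
  · rw [hρ]
    have h9 : 1/((k:ℝ)+1) = 1/((k:ℝ)+1) := rfl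
    push_cast
    linarith [hmk]
  intro zs' hP z hz
  have hz1 : ‖z‖ < 1 := by rw [hz]; exact hρ1
  set g : ℕ → ℂ := fun n => blaschkeFactor (zs' n) z with hg
  set low : ℕ → ℝ := fun n => if ‖zs n‖ < q then 4*m*(1 - ‖zs n‖)⁻¹ else 0 with hlow
  set high : ℕ → ℝ := fun n => if q' ≤ ‖zs n‖ then (16/m)*(1 - ‖zs n‖) else 0 with hhigh
  have hlow0 : ∀ n, 0 ≤ low n := by
    intro n; rw [hlow]; dsimp only; split_ifs with h
    · have : 0 < 1 - ‖zs n‖ := by linarith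
      positivity
    · exact le_refl 0
  have hhigh0 : ∀ n, 0 ≤ high n := by
    intro n; rw [hhigh]; dsimp only; split_ifs with h
    · have := t_nonneg hzs n; positivity
    · exact le_refl 0
  -- pointwise bound
  have hpw : ∀ n, 1 - ‖g n‖ ≤ low n + high n := by
    intro n
    rcases hP n with ⟨heq, hcase⟩ | hone
    · have hgn : g n = blaschkeFactor (zs n) z := by rw [hg]; simp [heq]
      have hT := one_sub_norm_bf_le (hzs n) hz1
      rw [hz] at hT
      rcases hcase with hl | hh
      · -- low zone
        have htn : 0 < 1 - ‖zs n‖ := by linarith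
        have hden : 1 - ‖zs n‖ ≤ 1 - ‖zs n‖ * ρ := by
          nlinarith [norm_nonneg (zs n)]
        have hden0 : 0 < 1 - ‖zs n‖ * ρ := by linarith
        have hb : 4*(1-‖zs n‖)*(1-ρ)/(1-‖zs n‖*ρ)^2 ≤ 4*m*(1-‖zs n‖)⁻¹ := by
          rw [div_le_iff₀ (by positivity)]
          have h1ρ : 1 - ρ = m := by rw [hρ]; ring
          rw [h1ρ]
          have e : 4*m*(1-‖zs n‖)⁻¹*(1-‖zs n‖*ρ)^2 =
              4*m*((1-‖zs n‖*ρ)^2 * (1-‖zs n‖)⁻¹) := by ring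
          rw [e]
          have h2 : (1-‖zs n‖)^2 * (1-‖zs n‖)⁻¹ ≤ (1-‖zs n‖*ρ)^2 * (1-‖zs n‖)⁻¹ := by
            apply mul_le_mul_of_nonneg_right _ (by positivity)
            nlinarith
          have h3 : (1-‖zs n‖)^2 * (1-‖zs n‖)⁻¹ = 1-‖zs n‖ := by
            rw [pow_two, mul_assoc, mul_inv_cancel₀ (ne_of_gt htn), mul_one]
          have h4 : 4*m*((1-‖zs n‖)^2*(1-‖zs n‖)⁻¹) ≤
              4*m*((1-‖zs n‖*ρ)^2*(1-‖zs n‖)⁻¹) :=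
            mul_le_mul_of_nonneg_left h2 (by positivity)
          rw [h3] at h4
          linarith
        rw [hgn]
        calc 1 - ‖blaschkeFactor (zs n) z‖ ≤ 4*(1-‖zs n‖)*(1-ρ)/(1-‖zs n‖*ρ)^2 := hT
          _ ≤ 4*m*(1-‖zs n‖)⁻¹ := hb
          _ = low n := by rw [hlow]; dsimp only; rw [if_pos hl]
          _ ≤ low n + high n := le_add_of_nonneg_right (hhigh0 n)
      · -- high zone
        have hzn2 : (1:ℝ)/2 ≤ ‖zs n‖ := by linarith
        have hden : ‖zs n‖ * (1 - ρ) ≤ 1 - ‖zs n‖ * ρ := by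
          nlinarith [hzs n]
        have h1ρ : 1 - ρ = m := by rw [hρ]; ring
        have hden2 : m/2 ≤ 1 - ‖zs n‖ * ρ := by
          rw [h1ρ] at hden
          nlinarith
        have hden0 : 0 < 1 - ‖zs n‖ * ρ :=
          lt_of_lt_of_le (by positivity : (0:ℝ) < m/2) hden2
        have hb : 4*(1-‖zs n‖)*(1-ρ)/(1-‖zs n‖*ρ)^2 ≤ (16/m)*(1-‖zs n‖) := by
          rw [div_le_iff₀ (by positivity), h1ρ]
          have htn0 : 0 ≤ 1 - ‖zs n‖ := t_nonneg hzs n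
          have h5 : m^2/4 ≤ (1-‖zs n‖*ρ)^2 := by nlinarith [hden2, hden0, hm0]
          have h16 : (0:ℝ) < 16/m := by positivity
          have h6 : (16/m)*(1-‖zs n‖)*(m^2/4) ≤ (16/m)*(1-‖zs n‖)*(1-‖zs n‖*ρ)^2 :=
            mul_le_mul_of_nonneg_left h5 (mul_nonneg h16.le htn0)
          have h7 : (16/m)*(1-‖zs n‖)*(m^2/4) = 4*(1-‖zs n‖)*m := by
            field_simp; ring
          rw [h7] at h6
          exact h6
        rw [hgn]
        calc 1 - ‖blaschkeFactor (zs n) z‖ ≤ 4*(1-‖zs n‖)*(1-ρ)/(1-‖zs n‖*ρ)^2 := hT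
          _ ≤ (16/m)*(1-‖zs n‖) := hb
          _ = high n := by rw [hhigh]; dsimp only; rw [if_pos hh]
          _ ≤ low n + high n := le_add_of_nonneg_left (hlow0 n)
    · have hgn : g n = 1 := by rw [hg]; simp only; rw [hone, bf_one]
      rw [hgn, norm_one, sub_self]
      exact add_nonneg (hlow0 n) (hhigh0 n)
  -- summability
  have hslow : Summable low := by
    apply summable_of_ne_finset_zero (s := Finset.range N)
    intro n hn
    rw [hlow]; dsimp only
    rw [if_neg (fun hc => hn (hN n hc))]
  have hshigh : Summable high := by
    apply Summable.of_nonneg_of_le hhigh0 _ (ht.mul_left (16/m))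
    intro n
    rw [hhigh]; dsimp only
    split_ifs with h
    · exact le_refl _
    · have := t_nonneg hzs n; positivity
  have hsg : Summable (fun n => 1 - ‖g n‖) := by
    apply Summable.of_nonneg_of_le _ hpw (hslow.add hshigh)
    intro n
    have : ‖g n‖ ≤ 1 := norm_bf_le_one hz1
    linarith
  -- sum bounds
  have hsumlow : ∑' n, low n ≤ 1/((k:ℝ)+1) := by
    have h1 : ∑' n, low n = ∑ i ∈ Finset.range N, low i := by
      apply tsum_eq_sum
      intro n hn
      rw [hlow]; dsimp only
      rw [if_neg (fun hc => hn (hN n hc))]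
    have h2 : ∑ i ∈ Finset.range N, low i = 4*m*W := by
      rw [hW, Finset.mul_sum]
      apply Finset.sum_congr rfl
      intro i _
      rw [hlow]; dsimp only
      split_ifs with h
      · ring
      · ring
    rw [h1, h2]; linarith
  have hsumhigh : ∑' n, high n ≤ 1/((k:ℝ)+1) := by
    have h1 : (fun n => high n) = (fun n => (16/m) * (if q' ≤ ‖zs n‖ then 1 - ‖zs n‖ else 0)) := by
      funext n
      rw [hhigh]; dsimp only
      split_ifs with h
      · rfl
      · ring
    rw [h1, tsum_mul_left]
    calc (16/m) * (∑' n, if q' ≤ ‖zs n‖ then 1 - ‖zs n‖ else 0)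
        ≤ (16/m) * (m/(16*((k:ℝ)+1))) := by
          apply mul_le_mul_of_nonneg_left hq'3 (by positivity)
      _ = 1/((k:ℝ)+1) := by field_simp
  calc (∑' n, (1 - ‖g n‖)) ≤ ∑' n, (low n + high n) :=
        Summable.tsum_le_tsum hpw hsg (hslow.add hshigh)
    _ = (∑' n, low n) + (∑' n, high n) := Summable.tsum_add hslow hshigh
    _ ≤ 1/((k:ℝ)+1) + 1/((k:ℝ)+1) := add_le_add hsumlow hsumhigh
    _ ≤ 4/((k:ℝ)+1) := by
        have h8 : (0:ℝ) ≤ 2/((k:ℝ)+1) := by positivity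
        have e : (4:ℝ)/((k:ℝ)+1) = 1/((k:ℝ)+1) + 1/((k:ℝ)+1) + 2/((k:ℝ)+1) := by ring
        linarith

end main

lemma t_nonneg' {zs : ℕ → ℂ} (hzs : ∀ n, ‖zs n‖ ≤ 1) (n : ℕ) : 0 ≤ 1 - ‖zs n‖ := by
  have := hzs n; linarith

lemma one_sub_norm_le_norm_sub_one (x : ℂ) : 1 - ‖x‖ ≤ ‖x - 1‖ := by
  calc 1 - ‖x‖ = ‖(1:ℂ)‖ - ‖x‖ := by rw [norm_one]
    _ ≤ ‖1 - x‖ := norm_sub_norm_le _ _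
    _ = ‖x - 1‖ := by rw [norm_sub_rev]

lemma gensum {w : ℕ → ℂ} (hw : ∀ n, ‖w n‖ ≤ 1) (hsw : Summable (fun n => 1 - ‖w n‖))
    {z : ℂ} (hz : ‖z‖ < 1) : Summable (fun n => ‖blaschkeFactor (w n) z - 1‖) := by
  apply Summable.of_nonneg_of_le (fun n => norm_nonneg _)
    (fun n => ?_) (hsw.mul_right (2/(1-‖z‖)))
  calc ‖blaschkeFactor (w n) z - 1‖ ≤ 2*(1-‖w n‖)/(1-‖z‖) := norm_bf_sub_one_le (hw n) hz
    _ = (1-‖w n‖)*(2/(1-‖z‖)) := by ring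

lemma genmult {w : ℕ → ℂ} (hw : ∀ n, ‖w n‖ ≤ 1) (hsw : Summable (fun n => 1 - ‖w n‖))
    {z : ℂ} (hz : ‖z‖ < 1) : Multipliable (fun n => blaschkeFactor (w n) z) :=
  multipliable_of_summable (gensum hw hsw hz)

lemma gendefect {w : ℕ → ℂ} (hw : ∀ n, ‖w n‖ ≤ 1) (hsw : Summable (fun n => 1 - ‖w n‖))
    {z : ℂ} (hz : ‖z‖ < 1) : Summable (fun n => 1 - ‖blaschkeFactor (w n) z‖) :=
  Summable.of_nonneg_of_le
    (fun n => by have := norm_bf_le_one (a := w n) hz; linarith)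
    (fun n => one_sub_norm_le_norm_sub_one _) (gensum hw hsw hz)

lemma exists_seq {zs : ℕ → ℂ} (hzs : ∀ n, ‖zs n‖ ≤ 1) (ht : Summable fun n => 1 - ‖zs n‖) :
    ∃ c ρ : ℕ → ℝ, (∀ k, 1/2 ≤ c k ∧ c k < 1) ∧
      ∀ k, c k < ρ k ∧ ρ k < c (k+1) ∧ 1 - 1/(k+1 : ℝ) ≤ ρ k ∧
        (∀ zs' : ℕ → ℂ,
          (∀ n, (zs' n = zs n ∧ (‖zs n‖ < c k ∨ c (k+1) ≤ ‖zs n‖)) ∨ zs' n = 1) →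
          ∀ z : ℂ, ‖z‖ = ρ k →
          (∑' n, (1 - ‖blaschkeFactor (zs' n) z‖)) ≤ 4 / (k+1 : ℝ)) := by
  choose ρf q'f h1 h2 h3 h4 h5 using
    fun (p : {q : ℝ // 1/2 ≤ q ∧ q < 1}) (k : ℕ) => exists_next hzs ht p.1 p.2.1 p.2.2 k
  let F : ℕ → {q : ℝ // 1/2 ≤ q ∧ q < 1} := fun n =>
    Nat.rec ⟨1/2, by norm_num⟩ (fun k p => ⟨q'f p k, h1 p k⟩) n
  refine ⟨fun k => (F k).1, fun k => ρf (F k) k, fun k => (F k).2,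
    fun k => ⟨h2 _ _, ?_, h4 _ _, ?_⟩⟩
  · exact h3 (F k) k
  · exact h5 (F k) k


/-- Lemma: every Blaschke product factors as a product of two floating
Blaschke products. -/
theorem statement_8 (b : ℂ → ℂ) (hb : IsBlaschkeProduct b) :
    ∃ b1 b2 : ℂ → ℂ, IsFloating b1 ∧ IsFloating b2 ∧
      ∀ z ∈ unitDisc, b z = b1 z * b2 z := by
  classical
  obtain ⟨lam, zs, hlam, hzs, ht, hprod⟩ := hb
  have hlam0 : lam ≠ 0 := by
    intro hc; rw [hc, norm_zero] at hlam; norm_num at hlam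
  obtain ⟨c, ρ, hcmem, hstep⟩ := exists_seq hzs ht
  have hsm : StrictMono c :=
    strictMono_nat_of_lt_succ (fun k => lt_trans (hstep k).1 (hstep k).2.1)
  set A : ℕ → Prop := fun n => ∃ j, c (2*j) ≤ ‖zs n‖ ∧ ‖zs n‖ < c (2*j+1) with hA
  set zs1 : ℕ → ℂ := fun n => if A n then zs n else 1 with hzs1def
  set zs2 : ℕ → ℂ := fun n => if A n then 1 else zs n with hzs2def
  have hzs1 : ∀ n, ‖zs1 n‖ ≤ 1 := by
    intro n; rw [hzs1def]; dsimp only; split_ifs; exacts [hzs n, by rw [norm_one]]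
  have hzs2 : ∀ n, ‖zs2 n‖ ≤ 1 := by
    intro n; rw [hzs2def]; dsimp only; split_ifs; exacts [by rw [norm_one], hzs n]
  have hsum1 : Summable (fun n => 1 - ‖zs1 n‖) := by
    apply Summable.of_nonneg_of_le (t_nonneg' hzs1) _ ht
    intro n; rw [hzs1def]; dsimp only; split_ifs
    · exact le_refl _
    · rw [norm_one]; simpa using t_nonneg' hzs n
  have hsum2 : Summable (fun n => 1 - ‖zs2 n‖) := by
    apply Summable.of_nonneg_of_le (t_nonneg' hzs2) _ ht
    intro n; rw [hzs2def]; dsimp only; split_ifs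
    · rw [norm_one]; simpa using t_nonneg' hzs n
    · exact le_refl _
  have hmem : ∀ z : ℂ, z ∈ unitDisc ↔ ‖z‖ < 1 := by
    intro z; rw [unitDisc, Metric.mem_ball, dist_zero_right]
  -- block avoidance
  have havoid1 : ∀ j : ℕ, ∀ n,
      (zs1 n = zs n ∧ (‖zs n‖ < c (2*j+1) ∨ c (2*j+1+1) ≤ ‖zs n‖)) ∨ zs1 n = 1 := by
    intro j n
    by_cases hAn : A n
    · left
      refine ⟨by rw [hzs1def]; simp [hAn], ?_⟩
      obtain ⟨j0, hj1, hj2⟩ := hAn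
      rcases Nat.lt_or_ge (2*j0) (2*j+1) with hlt | hge
      · left
        have : 2*j0+1 ≤ 2*j+1 := by omega
        exact lt_of_lt_of_le hj2 (hsm.monotone this)
      · right
        have : 2*j+1+1 ≤ 2*j0 := by omega
        exact le_trans (hsm.monotone this) hj1
    · right; rw [hzs1def]; simp [hAn]
  have havoid2 : ∀ j : ℕ, ∀ n,
      (zs2 n = zs n ∧ (‖zs n‖ < c (2*j) ∨ c (2*j+1) ≤ ‖zs n‖)) ∨ zs2 n = 1 := by
    intro j n
    by_cases hAn : A n
    · right; rw [hzs2def]; simp [hAn]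
    · left
      refine ⟨by rw [hzs2def]; simp [hAn], ?_⟩
      by_cases hlo : ‖zs n‖ < c (2*j)
      · exact Or.inl hlo
      · right
        by_contra hhi
        exact hAn ⟨j, not_lt.mp hlo, not_le.mp hhi⟩
  -- norm of points on circles
  have hcirc : ∀ (r : ℝ), 0 ≤ r → ∀ θ : ℝ, ‖(r : ℂ) * expI θ‖ = r := by
    intro r hr θ
    rw [norm_mul, Complex.norm_real, Real.norm_eq_abs, abs_of_nonneg hr, expI]
    rw [Complex.norm_exp]
    simp [Complex.mul_re, Complex.I_re, Complex.I_im]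
  have hinv : Tendsto (fun j : ℕ => 1/((j:ℝ)+1)) atTop (nhds 0) := by
    exact tendsto_one_div_add_atTop_nhds_zero_nat
  -- generic floating argument
  have floatgen : ∀ (w : ℕ → ℂ) (lam' : ℂ) (e : ℕ → ℕ), ‖lam'‖ = 1 →
      (∀ n, ‖w n‖ ≤ 1) → (Summable fun n => 1 - ‖w n‖) →
      (∀ j n, (w n = zs n ∧ (‖zs n‖ < c (e j) ∨ c (e j + 1) ≤ ‖zs n‖)) ∨ w n = 1) →
      (∀ j : ℕ, (j:ℝ) + 1 ≤ (e j : ℝ) + 1) →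
      (∃ r : ℕ → ℝ, (∀ n, r n ∈ Set.Ioo (0:ℝ) 1) ∧ Tendsto r atTop (nhds 1) ∧
        Tendsto (fun n => ⨅ θ : ℝ, ‖lam' * ∏' i, blaschkeFactor (w i) ((r n : ℂ) * expI θ)‖)
          atTop (nhds 1)) := by
    intro w lam' e hl1 hw hsw havoid hgrow
    have hρpos : ∀ k, 0 < ρ k := by
      intro k; have := (hcmem k).1; have := (hstep k).1; linarith
    have hρ1 : ∀ k, ρ k < 1 := by
      intro k; have := (hstep k).2.1; have := (hcmem (k+1)).2; linarith
    have key : ∀ j : ℕ, ∀ θ : ℝ,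
        1 - 4/((j:ℝ)+1) ≤ ‖lam' * ∏' i, blaschkeFactor (w i) ((ρ (e j) : ℂ) * expI θ)‖ ∧
        ‖lam' * ∏' i, blaschkeFactor (w i) ((ρ (e j) : ℂ) * expI θ)‖ ≤ 1 := by
      intro j θ
      set z : ℂ := (ρ (e j) : ℂ) * expI θ with hzdef
      have hzn : ‖z‖ = ρ (e j) := hcirc _ (hρpos (e j)).le θ
      have hz1 : ‖z‖ < 1 := by rw [hzn]; exact hρ1 (e j)
      have hmul := genmult hw hsw hz1
      have hsd := gendefect hw hsw hz1
      have hbounds := hasProd_norm_bounds hmul.hasProd (fun i => norm_bf_le_one hz1) hsd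
      have htsum : (∑' i, (1 - ‖blaschkeFactor (w i) z‖)) ≤ 4/((j:ℝ)+1) := by
        have h1 := (hstep (e j)).2.2.2 w (havoid j) z hzn
        have h2 : 4/((e j:ℝ)+1) ≤ 4/((j:ℝ)+1) := by
          have h3 := one_div_le_one_div_of_le (by positivity : (0:ℝ) < (j:ℝ)+1) (hgrow j)
          have e1 : 4/((e j:ℝ)+1) = 4*(1/((e j:ℝ)+1)) := by ring
          have e2 : 4/((j:ℝ)+1) = 4*(1/((j:ℝ)+1)) := by ring
          rw [e1, e2]
          linarith
        linarith
      have hnorm : ‖lam' * ∏' i, blaschkeFactor (w i) z‖ = ‖∏' i, blaschkeFactor (w i) z‖ := by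
        rw [norm_mul, hl1, one_mul]
      rw [hnorm]
      exact ⟨le_trans (by linarith [hbounds.1]) (le_refl _), hbounds.2⟩
    refine ⟨fun j => ρ (e j), ?_, ?_, ?_⟩
    · exact fun j => ⟨hρpos (e j), hρ1 (e j)⟩
    · apply tendsto_of_tendsto_of_tendsto_of_le_of_le
        (g := fun j : ℕ => 1 - 1/((j:ℝ)+1)) (h := fun _ : ℕ => (1:ℝ))
      · have := (tendsto_const_nhds (x := (1:ℝ)) (f := atTop (α := ℕ))).sub hinv
        simpa using this
      · exact tendsto_const_nhds
      · intro j
        show 1 - 1/((j:ℝ)+1) ≤ ρ (e j)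
        have h1 := (hstep (e j)).2.2.1
        have h2 : 1/((e j:ℝ)+1) ≤ 1/((j:ℝ)+1) :=
          one_div_le_one_div_of_le (by positivity) (hgrow j)
        linarith
      · intro j
        show ρ (e j) ≤ 1
        exact (hρ1 (e j)).le
    · apply tendsto_of_tendsto_of_tendsto_of_le_of_le
        (g := fun j : ℕ => 1 - 4/((j:ℝ)+1)) (h := fun _ : ℕ => (1:ℝ))
      · have h4 : Tendsto (fun j : ℕ => 4/((j:ℝ)+1)) atTop (nhds 0) := by
          have := hinv.const_mul (4:ℝ)
          simp only [mul_zero] at this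
          convert this using 2 with j
          ring
        have := (tendsto_const_nhds (x := (1:ℝ)) (f := atTop (α := ℕ))).sub h4
        simpa using this
      · exact tendsto_const_nhds
      · intro j
        show 1 - 4/((j:ℝ)+1) ≤ ⨅ θ : ℝ, ‖lam' * ∏' i, blaschkeFactor (w i) ((ρ (e j) : ℂ) * expI θ)‖
        exact le_ciInf (fun θ => (key j θ).1)
      · intro j
        show (⨅ θ : ℝ, ‖lam' * ∏' i, blaschkeFactor (w i) ((ρ (e j) : ℂ) * expI θ)‖) ≤ 1
        have hbdd : BddBelow (Set.range fun θ : ℝ =>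
            ‖lam' * ∏' i, blaschkeFactor (w i) ((ρ (e j) : ℂ) * expI θ)‖) := by
          refine ⟨0, ?_⟩
          rintro x ⟨θ, rfl⟩
          exact norm_nonneg _
        exact le_trans (ciInf_le hbdd 0) (key j 0).2
  -- assemble
  refine ⟨fun z => lam * ∏' n, blaschkeFactor (zs1 n) z,
    fun z => (1:ℂ) * ∏' n, blaschkeFactor (zs2 n) z, ⟨⟨lam, zs1, ?_⟩, ?_⟩, ⟨⟨1, zs2, ?_⟩, ?_⟩, ?_⟩
  · refine ⟨hlam, hzs1, hsum1, fun z hz => ?_⟩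
    have h := (genmult hzs1 hsum1 ((hmem z).mp hz)).hasProd
    have e : lam⁻¹ * (lam * ∏' n, blaschkeFactor (zs1 n) z) =
        ∏' n, blaschkeFactor (zs1 n) z := by rw [inv_mul_cancel_left₀ hlam0]
    rw [e]; exact h
  · exact floatgen zs1 lam (fun j => 2*j+1) hlam hzs1 hsum1 havoid1
      (fun j => by push_cast; linarith [Nat.cast_nonneg (α := ℝ) j])
  · refine ⟨norm_one, hzs2, hsum2, fun z hz => ?_⟩
    have h := (genmult hzs2 hsum2 ((hmem z).mp hz)).hasProd
    have e : (1:ℂ)⁻¹ * ((1:ℂ) * ∏' n, blaschkeFactor (zs2 n) z) =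
        ∏' n, blaschkeFactor (zs2 n) z := by rw [inv_one, one_mul, one_mul]
    rw [e]; exact h
  · exact floatgen zs2 1 (fun j => 2*j) norm_one hzs2 hsum2 havoid2
      (fun j => by push_cast; linarith [Nat.cast_nonneg (α := ℝ) j])
  · intro z hz
    have hz1 : ‖z‖ < 1 := (hmem z).mp hz
    have h1 := (genmult hzs1 hsum1 hz1).hasProd
    have h2 := (genmult hzs2 hsum2 hz1).hasProd
    have h12 := h1.mul h2
    have e : (fun n => blaschkeFactor (zs1 n) z * blaschkeFactor (zs2 n) z) =
        (fun n => blaschkeFactor (zs n) z) := by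
      funext n
      rw [hzs1def, hzs2def]; dsimp only
      by_cases hAn : A n
      · rw [if_pos hAn, if_pos hAn, bf_one, mul_one]
      · rw [if_neg hAn, if_neg hAn, bf_one, one_mul]
    rw [e] at h12
    have hu := (hprod z hz).unique h12
    show b z = (lam * ∏' n, blaschkeFactor (zs1 n) z) * ((1:ℂ) * ∏' n, blaschkeFactor (zs2 n) z)
    rw [one_mul]
    calc b z = lam * (lam⁻¹ * b z) := by rw [mul_inv_cancel_left₀ hlam0]
      _ = lam * ((∏' n, blaschkeFactor (zs1 n) z) * ∏' n, blaschkeFactor (zs2 n) z) := by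
          rw [hu]
      _ = (lam * ∏' n, blaschkeFactor (zs1 n) z) * ∏' n, blaschkeFactor (zs2 n) z := by ring

end
end
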